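/- arXiv:2012.07174 — 7 statements merged into one kernel-verified Lean document; each statement's English description precedes it below -/
import Mathlib

section
/- Let H be a real separable Hilbert space, let B and D be bounded linear operators on H, and define Q(t) = ∫₀ᵗ e^{rD*} ∘ B ∘ e^{rD} dr, where e^{rD} is the operator exponential and D* the adjoint of D. Then for all t, s ≥ 0 one has the flow identity Q(t+s) = Q(s) + e^{sD*} ∘ Q(t) ∘ e^{sD}. -/
set_option maxHeartbeats 1000000
set_option synthInstance.maxHeartbeats 200000
open NormedSpace intervalIntegral

/-- **Flow identity for the covariance operator (Theorems 2–3 of the paper).**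
For bounded operators `B`, `D` on a real separable Hilbert space,
`Q(t) = ∫₀ᵗ e^{rD*} ∘ B ∘ e^{rD} dr` satisfies
`Q(t+s) = Q(s) + e^{sD*} ∘ Q(t) ∘ e^{sD}` for all `t, s ≥ 0`. -/
theorem covariance_flow_identity
    {H : Type*} [NormedAddCommGroup H] [InnerProductSpace ℝ H] [CompleteSpace H]
    [TopologicalSpace.SeparableSpace H]
    (B D : H →L[ℝ] H)
    (Q : ℝ → (H →L[ℝ] H))
    (hQ : Q = fun t => ∫ r in (0:ℝ)..t,
      NormedSpace.exp (r • ContinuousLinearMap.adjoint D) ∘L B ∘L NormedSpace.exp (r • D)) :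
    ∀ t s : ℝ, 0 ≤ t → 0 ≤ s →
      Q (t + s) = Q s +
        NormedSpace.exp (s • ContinuousLinearMap.adjoint D) ∘L Q t ∘L
          NormedSpace.exp (s • D) := by
  intro t s ht hs
  let +nondep : NormedAlgebra ℚ (H →L[ℝ] H) := .restrictScalars ℚ ℝ _
  subst hQ
  set Ds := ContinuousLinearMap.adjoint D with hDs
  set f : ℝ → (H →L[ℝ] H) := fun r =>
    NormedSpace.exp (r • Ds) ∘L B ∘L NormedSpace.exp (r • D) with hf
  have hc : Continuous f := by
    apply Continuous.clm_comp
    · exact NormedSpace.exp_continuous.comp (continuous_id.smul continuous_const)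
    · exact Continuous.clm_comp continuous_const
        (NormedSpace.exp_continuous.comp (continuous_id.smul continuous_const))
  have hi : ∀ a b : ℝ, IntervalIntegrable f MeasureTheory.volume a b :=
    fun a b => hc.intervalIntegrable a b
  have split : (∫ r in (0:ℝ)..(t+s), f r)
      = (∫ r in (0:ℝ)..s, f r) + ∫ r in s..(t+s), f r :=
    (intervalIntegral.integral_add_adjacent_intervals (hi 0 s) (hi s (t+s))).symm
  have shift : (∫ r in s..(t+s), f r) = ∫ r in (0:ℝ)..t, f (r + s) := by
    rw [intervalIntegral.integral_comp_add_right f s]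
    norm_num [add_comm]
  -- the composition map as a CLM
  let Lc := ContinuousLinearMap.compL ℝ H H H
  let T : (H →L[ℝ] H) →L[ℝ] (H →L[ℝ] H) :=
    (Lc (NormedSpace.exp (s • Ds))) ∘L (Lc.flip (NormedSpace.exp (s • D)))
  have hT : ∀ A : H →L[ℝ] H, T A
      = NormedSpace.exp (s • Ds) ∘L A ∘L NormedSpace.exp (s • D) := fun A => rfl
  have key : ∀ r : ℝ, f (r + s) = T (f r) := by
    intro r
    rw [hT]
    have h1 : NormedSpace.exp ((r + s) • D)
        = NormedSpace.exp (r • D) * NormedSpace.exp (s • D) := by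
      rw [add_smul]
      exact NormedSpace.exp_add_of_commute ((Commute.refl D).smul_left r |>.smul_right s)
    have h2 : NormedSpace.exp ((r + s) • Ds)
        = NormedSpace.exp (s • Ds) * NormedSpace.exp (r • Ds) := by
      rw [add_smul, add_comm]
      exact NormedSpace.exp_add_of_commute ((Commute.refl Ds).smul_left s |>.smul_right r)
    simp only [hf, h1, h2, ContinuousLinearMap.mul_def]
    ext x; rfl
  have comm : (∫ r in (0:ℝ)..t, f (r + s)) = T (∫ r in (0:ℝ)..t, f r) := by
    simp only [key]
    exact T.intervalIntegral_comp_comm (hi 0 t)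
  show (∫ r in (0:ℝ)..(t+s), f r) = _
  rw [split, shift, comm, hT]
end

section
/- Let H be a real separable Hilbert space and let B, C be bounded linear operators on H with B∘C = C∘B. For t ∈ ℝ set ch(t) = ∑_{n=0}^∞ t^{2n}(C∘B)ⁿ/(2n)! and sh(t) = ∑_{n=0}^∞ t^{2n+1}(C∘B)ⁿ/(2n+1)!, and assume that ch(t) is invertible (a unit in the algebra of bounded operators) for every t. Define Q(t) = sh(t) ∘ ch(t)⁻¹ ∘ B. Then Q(0) = 0 and t ↦ Q(t) is differentiable with Q'(t) = B − Q(t) ∘ C ∘ Q(t) for all t. -/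
section Aux

variable {R : Type*} [NormedRing R] [NormedAlgebra ℝ R] [CompleteSpace R]

lemma pow_norm_le (A : R) (h1 : ‖(1:R)‖ ≤ 1) : ∀ n : ℕ, ‖A ^ n‖ ≤ (max 1 ‖A‖) ^ n := by
  intro n
  induction n with
  | zero => simpa using h1
  | succ n ih =>
    calc ‖A ^ (n+1)‖ = ‖A ^ n * A‖ := by rw [pow_succ]
    _ ≤ ‖A ^ n‖ * ‖A‖ := norm_mul_le _ _
    _ ≤ (max 1 ‖A‖) ^ n * max 1 ‖A‖ := by
        apply mul_le_mul ih (le_max_right _ _) (norm_nonneg _)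
        positivity
    _ = (max 1 ‖A‖) ^ (n+1) := (pow_succ _ _).symm

lemma ch_term_norm_le (A : R) (h1 : ‖(1:R)‖ ≤ 1) (t : ℝ) (n : ℕ) :
    ‖(t ^ (2 * n) / (Nat.factorial (2 * n) : ℝ)) • A ^ n‖ ≤
      (t ^ 2 * max 1 ‖A‖) ^ n / (Nat.factorial n : ℝ) := by
  rw [norm_smul, Real.norm_eq_abs]
  have h2 : ‖A ^ n‖ ≤ (max 1 ‖A‖) ^ n := pow_norm_le A h1 n
  calc |t ^ (2*n) / (Nat.factorial (2*n) : ℝ)| * ‖A ^ n‖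
      ≤ ((t^2) ^ n / (Nat.factorial n : ℝ)) * (max 1 ‖A‖) ^ n := by
        rw [abs_div, abs_of_nonneg (by positivity : (0:ℝ) ≤ (Nat.factorial (2*n) : ℝ))]
        apply mul_le_mul _ h2 (norm_nonneg _) (by positivity)
        rw [abs_pow, pow_mul, sq_abs]
        exact div_le_div_of_nonneg_left (by positivity) (by positivity) (by exact_mod_cast Nat.factorial_le (by omega))
    _ = (t ^ 2 * max 1 ‖A‖) ^ n / (Nat.factorial n : ℝ) := by
        rw [mul_pow]; ring

lemma summable_ch (A : R) (h1 : ‖(1:R)‖ ≤ 1) (t : ℝ) :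
    Summable fun n : ℕ => (t ^ (2 * n) / (Nat.factorial (2 * n) : ℝ)) • A ^ n := by
  apply Summable.of_norm
  exact Summable.of_nonneg_of_le (fun n => norm_nonneg _) (ch_term_norm_le A h1 t)
    (Real.summable_pow_div_factorial _)

lemma sh_term_norm_le (A : R) (h1 : ‖(1:R)‖ ≤ 1) (t : ℝ) (n : ℕ) :
    ‖(t ^ (2 * n + 1) / (Nat.factorial (2 * n + 1) : ℝ)) • A ^ n‖ ≤
      (max 1 |t|) * ((t ^ 2 * max 1 ‖A‖) ^ n / (Nat.factorial n : ℝ)) := by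
  rw [norm_smul, Real.norm_eq_abs]
  have h2 : ‖A ^ n‖ ≤ (max 1 ‖A‖) ^ n := pow_norm_le A h1 n
  calc |t ^ (2*n+1) / (Nat.factorial (2*n+1) : ℝ)| * ‖A ^ n‖
      ≤ (|t| * ((t^2) ^ n / (Nat.factorial n : ℝ))) * (max 1 ‖A‖) ^ n := by
        rw [abs_div, abs_of_nonneg (by positivity : (0:ℝ) ≤ (Nat.factorial (2*n+1) : ℝ))]
        apply mul_le_mul _ h2 (norm_nonneg _) (by positivity)
        rw [pow_succ, abs_mul, abs_pow, pow_mul, sq_abs, mul_comm _ |t|, mul_div_assoc]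
        exact mul_le_mul_of_nonneg_left (div_le_div_of_nonneg_left (by positivity)
          (by positivity) (by exact_mod_cast Nat.factorial_le (by omega))) (abs_nonneg t)
    _ ≤ (max 1 |t|) * ((t ^ 2 * max 1 ‖A‖) ^ n / (Nat.factorial n : ℝ)) := by
        rw [mul_pow, mul_assoc]
        apply mul_le_mul (le_max_right _ _) _ (by positivity) (by positivity)
        rw [mul_div_assoc]
        apply le_of_eq; ring

lemma summable_sh (A : R) (h1 : ‖(1:R)‖ ≤ 1) (t : ℝ) :
    Summable fun n : ℕ => (t ^ (2 * n + 1) / (Nat.factorial (2 * n + 1) : ℝ)) • A ^ n := by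
  apply Summable.of_norm
  exact Summable.of_nonneg_of_le (fun n => norm_nonneg _) (sh_term_norm_le A h1 t)
    ((Real.summable_pow_div_factorial _).mul_left _)

end Aux

section Aux2

variable {R : Type*} [NormedRing R] [NormedAlgebra ℝ R] [CompleteSpace R]

lemma ch_scal_id (n : ℕ) (t : ℝ) :
    ((2*(n+1) : ℕ) : ℝ) * t ^ (2*(n+1)-1) / ((Nat.factorial (2*(n+1))) : ℝ)
      = t ^ (2*n+1) / ((Nat.factorial (2*n+1)) : ℝ) := by
  have h2 : 2*(n+1) = (2*n+1)+1 := by ring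
  rw [h2, Nat.factorial_succ]
  have hne : ((2*n+1 : ℕ) : ℝ) + 1 ≠ 0 := by positivity
  have hfe : ((Nat.factorial (2*n+1) : ℕ) : ℝ) ≠ 0 := by
    exact_mod_cast Nat.factorial_ne_zero _
  push_cast
  field_simp

lemma sh_scal_id (n : ℕ) (t : ℝ) :
    ((2*n+1 : ℕ) : ℝ) * t ^ (2*n+1-1) / ((Nat.factorial (2*n+1)) : ℝ)
      = t ^ (2*n) / ((Nat.factorial (2*n)) : ℝ) := by
  rw [Nat.factorial_succ]
  have hfe : ((Nat.factorial (2*n) : ℕ) : ℝ) ≠ 0 := by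
    exact_mod_cast Nat.factorial_ne_zero _
  have hne : ((2*n : ℕ) : ℝ) + 1 ≠ 0 := by positivity
  push_cast
  field_simp

lemma hasDerivAt_sh_term (A : R) (n : ℕ) (y : ℝ) :
    HasDerivAt (fun y : ℝ => (y ^ (2*n+1) / (Nat.factorial (2*n+1) : ℝ)) • A ^ n)
      ((y ^ (2*n) / (Nat.factorial (2*n) : ℝ)) • A ^ n) y := by
  have h := ((hasDerivAt_pow (2*n+1) y).div_const ((Nat.factorial (2*n+1)) : ℝ)).smul_const (A ^ n)
  rwa [sh_scal_id n y] at h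

lemma hasDerivAt_ch_term (A : R) (n : ℕ) (y : ℝ) :
    HasDerivAt (fun y : ℝ => (y ^ (2*n) / (Nat.factorial (2*n) : ℝ)) • A ^ n)
      ((((2*n : ℕ) : ℝ) * y ^ (2*n-1) / (Nat.factorial (2*n) : ℝ)) • A ^ n) y :=
  ((hasDerivAt_pow (2*n) y).div_const ((Nat.factorial (2*n)) : ℝ)).smul_const (A ^ n)

lemma ch_deriv_term_bound (A : R) (h1 : ‖(1:R)‖ ≤ 1) {r y : ℝ} (hr : 1 ≤ r) (hy : |y| ≤ r)
    (n : ℕ) :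
    ‖((((2*n : ℕ) : ℝ) * y ^ (2*n-1) / (Nat.factorial (2*n) : ℝ)) • A ^ n)‖ ≤
      (r ^ 2 * max 1 ‖A‖) ^ n / (Nat.factorial n : ℝ) := by
  cases n with
  | zero => simp
  | succ n =>
    rw [norm_smul, Real.norm_eq_abs, ch_scal_id n y]
    have hM : ‖A ^ (n+1)‖ ≤ (max 1 ‖A‖) ^ (n+1) := pow_norm_le A h1 (n+1)
    have hMpos : (0:ℝ) ≤ max 1 ‖A‖ := le_trans zero_le_one (le_max_left _ _)
    calc |y ^ (2*n+1) / (Nat.factorial (2*n+1) : ℝ)| * ‖A ^ (n+1)‖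
        ≤ (r ^ (2*(n+1)) / (Nat.factorial (n+1) : ℝ)) * (max 1 ‖A‖) ^ (n+1) := by
          apply mul_le_mul _ hM (norm_nonneg _) (by positivity)
          rw [abs_div, abs_of_nonneg (by positivity : (0:ℝ) ≤ (Nat.factorial (2*n+1) : ℝ)),
            abs_pow]
          apply div_le_div₀ (by positivity) _ (by positivity)
            (by exact_mod_cast Nat.factorial_le (by omega))
          calc |y| ^ (2*n+1) ≤ r ^ (2*n+1) :=
                pow_le_pow_left₀ (abs_nonneg y) hy _
            _ ≤ r ^ (2*(n+1)) := pow_le_pow_right₀ hr (by omega)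
      _ = (r ^ 2 * max 1 ‖A‖) ^ (n+1) / (Nat.factorial (n+1) : ℝ) := by
          rw [mul_pow, ← pow_mul]; ring

lemma ch_term_bound (A : R) (h1 : ‖(1:R)‖ ≤ 1) {r y : ℝ} (hr : 1 ≤ r) (hy : |y| ≤ r) (n : ℕ) :
    ‖(y ^ (2*n) / (Nat.factorial (2*n) : ℝ)) • A ^ n‖ ≤
      (r ^ 2 * max 1 ‖A‖) ^ n / (Nat.factorial n : ℝ) := by
  refine (ch_term_norm_le A h1 y n).trans ?_
  have hMpos : (0:ℝ) ≤ max 1 ‖A‖ := le_trans zero_le_one (le_max_left _ _)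
  apply div_le_div_of_nonneg_right _ (by positivity)
  apply pow_le_pow_left₀ (by positivity)
  have : y ^ 2 ≤ r ^ 2 := by
    rw [← sq_abs]; exact pow_le_pow_left₀ (abs_nonneg y) hy 2
  exact mul_le_mul_of_nonneg_right this hMpos

lemma summable_ch_deriv (A : R) (h1 : ‖(1:R)‖ ≤ 1) (t : ℝ) :
    Summable fun n : ℕ =>
      ((((2*n : ℕ) : ℝ) * t ^ (2*n-1) / (Nat.factorial (2*n) : ℝ)) • A ^ n) := by
  apply Summable.of_norm
  exact Summable.of_nonneg_of_le (fun n => norm_nonneg _)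
    (ch_deriv_term_bound A h1 (le_add_of_nonneg_left (abs_nonneg t))
      (le_add_of_nonneg_right zero_le_one) )
    (Real.summable_pow_div_factorial _)

lemma hasDerivAt_ch (A : R) (h1 : ‖(1:R)‖ ≤ 1) (t : ℝ) :
    HasDerivAt (fun y : ℝ => ∑' n : ℕ, (y ^ (2*n) / (Nat.factorial (2*n) : ℝ)) • A ^ n)
      (∑' n : ℕ, ((((2*n : ℕ) : ℝ) * t ^ (2*n-1) / (Nat.factorial (2*n) : ℝ)) • A ^ n)) t := by
  set r : ℝ := |t| + 1 with hrdef
  have hr : 1 ≤ r := le_add_of_nonneg_left (abs_nonneg t)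
  apply hasDerivAt_tsum_of_isPreconnected
    (u := fun n => (r ^ 2 * max 1 ‖A‖) ^ n / (Nat.factorial n : ℝ))
    (Real.summable_pow_div_factorial _) (Metric.isOpen_ball (x := (0:ℝ)) (ε := r))
    ((convex_ball (0:ℝ) r).isPreconnected)
    (fun n y _ => hasDerivAt_ch_term A n y)
    (fun n y hy => ch_deriv_term_bound A h1 hr
      (le_of_lt (by simpa [Real.norm_eq_abs] using mem_ball_zero_iff.mp hy)) n)
    (y₀ := t) ?_ (summable_ch A h1 t) ?_ <;>
  · simp [mem_ball_zero_iff, Real.norm_eq_abs, hrdef]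

lemma hasDerivAt_sh (A : R) (h1 : ‖(1:R)‖ ≤ 1) (t : ℝ) :
    HasDerivAt (fun y : ℝ => ∑' n : ℕ, (y ^ (2*n+1) / (Nat.factorial (2*n+1) : ℝ)) • A ^ n)
      (∑' n : ℕ, (t ^ (2*n) / (Nat.factorial (2*n) : ℝ)) • A ^ n) t := by
  set r : ℝ := |t| + 1 with hrdef
  have hr : 1 ≤ r := le_add_of_nonneg_left (abs_nonneg t)
  apply hasDerivAt_tsum_of_isPreconnected
    (u := fun n => (r ^ 2 * max 1 ‖A‖) ^ n / (Nat.factorial n : ℝ))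
    (Real.summable_pow_div_factorial _) (Metric.isOpen_ball (x := (0:ℝ)) (ε := r))
    ((convex_ball (0:ℝ) r).isPreconnected)
    (fun n y _ => hasDerivAt_sh_term A n y)
    (fun n y hy => ch_term_bound A h1 hr
      (le_of_lt (by simpa [Real.norm_eq_abs] using mem_ball_zero_iff.mp hy)) n)
    (y₀ := t) ?_ (summable_sh A h1 t) ?_ <;>
  · simp [mem_ball_zero_iff, Real.norm_eq_abs, hrdef]

lemma ch_deriv_eq (A : R) (h1 : ‖(1:R)‖ ≤ 1) (t : ℝ) :
    (∑' n : ℕ, ((((2*n : ℕ) : ℝ) * t ^ (2*n-1) / (Nat.factorial (2*n) : ℝ)) • A ^ n))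
      = (∑' n : ℕ, (t ^ (2*n+1) / (Nat.factorial (2*n+1) : ℝ)) • A ^ n) * A := by
  rw [← ((summable_sh A h1 t).hasSum.mul_right A).tsum_eq,
    Summable.tsum_eq_zero_add (summable_ch_deriv A h1 t)]
  have h0 : ((((2*0 : ℕ) : ℝ) * t ^ (2*0-1) / (Nat.factorial (2*0) : ℝ)) • A ^ 0) = 0 := by
    simp
  rw [h0, zero_add]
  congr 1
  funext n
  rw [ch_scal_id n t, smul_mul_assoc, ← pow_succ]

end Aux2

/-- **Q-component of Theorem 4 of the paper (operator Riccati equation, D = 0).**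
On a real separable Hilbert space, for commuting bounded operators `B`, `C`, with
`ch(t) = ∑ t^{2n}(CB)ⁿ/(2n)!` and `sh(t) = ∑ t^{2n+1}(CB)ⁿ/(2n+1)!`, if `ch(t)` is
invertible for every `t`, then `Q(t) = sh(t) ∘ ch(t)⁻¹ ∘ B` satisfies `Q(0) = 0` and
`Q'(t) = B − Q(t) ∘ C ∘ Q(t)`. -/
theorem riccati_solution_Q_component
    {H : Type*} [NormedAddCommGroup H] [InnerProductSpace ℝ H] [CompleteSpace H]
    [TopologicalSpace.SeparableSpace H]
    (B C : H →L[ℝ] H) (hBC : B ∘L C = C ∘L B)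
    (ch sh : ℝ → (H →L[ℝ] H))
    (hch : ch = fun t : ℝ =>
      ∑' n : ℕ, (t ^ (2 * n) / (Nat.factorial (2 * n) : ℝ)) • (C ∘L B) ^ n)
    (hsh : sh = fun t : ℝ =>
      ∑' n : ℕ, (t ^ (2 * n + 1) / (Nat.factorial (2 * n + 1) : ℝ)) • (C ∘L B) ^ n)
    (hunit : ∀ t : ℝ, IsUnit (ch t))
    (Q : ℝ → (H →L[ℝ] H))
    (hQ : Q = fun t : ℝ => sh t ∘L Ring.inverse (ch t) ∘L B) :
    Q 0 = 0 ∧ ∀ t : ℝ, HasDerivAt Q (B - Q t ∘L C ∘L Q t) t := by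
  set A : H →L[ℝ] H := C ∘L B with hA
  have h1 : ‖(1 : H →L[ℝ] H)‖ ≤ 1 := by
    rw [ContinuousLinearMap.one_def]; exact ContinuousLinearMap.norm_id_le
  have hsh0 : sh 0 = 0 := by
    rw [hsh]
    simp [zero_pow]
  constructor
  · rw [hQ]
    simp only [hsh0, ContinuousLinearMap.zero_comp]
  intro t
  -- derivative of sh
  have hsh' : HasDerivAt sh (ch t) t := by
    rw [hsh, hch]
    exact hasDerivAt_sh A h1 t
  -- derivative of ch
  have hch' : HasDerivAt ch (sh t * A) t := by
    rw [hch, hsh]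
    have h := hasDerivAt_ch A h1 t
    rwa [ch_deriv_eq A h1 t] at h
  -- derivative of the inverse
  set u : (H →L[ℝ] H)ˣ := (hunit t).unit with hu
  have hus : (u : H →L[ℝ] H) = ch t := (hunit t).unit_spec
  have huinv : ((u⁻¹ : (H →L[ℝ] H)ˣ) : H →L[ℝ] H) = Ring.inverse (ch t) := by
    rw [← hus, Ring.inverse_unit]
  set I : H →L[ℝ] H := Ring.inverse (ch t) with hI
  have hinv' : HasDerivAt (fun s => Ring.inverse (ch s)) (-(I * (sh t * A) * I)) t := by
    have h := (hasFDerivAt_ringInverse (𝕜 := ℝ) u)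
    rw [hus] at h
    have h2 := h.comp_hasDerivAt t hch'
    simpa [huinv, Function.comp_def] using h2
  -- product rule
  have hg : HasDerivAt (fun s => Ring.inverse (ch s) * B) (-(I * (sh t * A) * I) * B) t :=
    hinv'.mul_const B
  have hQd : HasDerivAt Q (ch t * (I * B) + sh t * (-(I * (sh t * A) * I) * B)) t := by
    have h := hsh'.mul hg
    have hQeq : Q = fun s => sh s * (Ring.inverse (ch s) * B) := by
      rw [hQ]; funext s
      simp only [ContinuousLinearMap.mul_def]
    rw [hQeq]
    exact h
  -- algebraic identification of the derivative
  haveI : IsScalarTower ℝ (H →L[ℝ] H) (H →L[ℝ] H) := IsScalarTower.right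
  haveI : SMulCommClass ℝ (H →L[ℝ] H) (H →L[ℝ] H) := SMulCommClass.symm _ _ _
  have hcomm : A * sh t = sh t * A := by
    rw [hsh]
    exact (Commute.tsum_right A fun n =>
      (((Commute.refl A).pow_right n).smul_right _)).eq
  have hBC' : B * C = A := by
    rw [ContinuousLinearMap.mul_def, hBC, hA]
  have hu1 : ch t * I = 1 := Ring.mul_inverse_cancel _ (hunit t)
  have key : ch t * (I * B) + sh t * (-(I * (sh t * A) * I) * B)
      = B - Q t * (C * Q t) := by
    rw [hQ]
    simp only [← ContinuousLinearMap.mul_def]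
    rw [← hcomm, sub_eq_add_neg]
    congr 1
    · rw [← mul_assoc, hu1, one_mul]
    · simp only [neg_mul, mul_neg, neg_inj, mul_assoc]
      rw [← mul_assoc B C, hBC']
  rw [key] at hQd
  have : Q t * (C * Q t) = Q t ∘L C ∘L Q t := by
    simp only [ContinuousLinearMap.mul_def]
  rwa [this] at hQd
end

section
/- Let H be a real separable Hilbert space and let B, C be bounded linear operators on H with B∘C = C∘B. For t ∈ ℝ set ch(t) = ∑_{n=0}^∞ t^{2n}(C∘B)ⁿ/(2n)! and sh(t) = ∑_{n=0}^∞ t^{2n+1}(C∘B)ⁿ/(2n+1)!, assume ch(t) is invertible for every t, and define Q(t) = sh(t) ∘ ch(t)⁻¹ ∘ B and R(t) = ch(t)⁻¹. Then R(0) = I and t ↦ R(t) is differentiable with R'(t) = − Q(t) ∘ C ∘ R(t) for all t. -/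
open scoped Nat

section Aux

variable {𝔸 : Type*} [NormedRing 𝔸] [NormedAlgebra ℝ 𝔸] [CompleteSpace 𝔸]

omit [CompleteSpace 𝔸] in
/-- crude bound on norm of powers, valid also without `NormOneClass`. -/
lemma my_norm_pow_le (A : 𝔸) (n : ℕ) :
    ‖A ^ n‖ ≤ max 1 ‖(1 : 𝔸)‖ * ‖A‖ ^ n := by
  cases n with
  | zero => simpa using le_max_right 1 ‖(1 : 𝔸)‖
  | succ m =>
      calc ‖A ^ (m + 1)‖ ≤ ‖A‖ ^ (m + 1) := norm_pow_le' A m.succ_pos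
        _ ≤ max 1 ‖(1 : 𝔸)‖ * ‖A‖ ^ (m + 1) := by
            nlinarith [le_max_left (1:ℝ) ‖(1 : 𝔸)‖, pow_nonneg (norm_nonneg A) (m+1)]

lemma my_summable_aux (K : ℝ) (j : ℕ → ℕ) (hj : Function.Injective j) :
    Summable (fun n : ℕ => K ^ (j n) / ((j n)! : ℝ)) :=
  (Real.summable_pow_div_factorial K).comp_injective hj

omit [CompleteSpace 𝔸] in
lemma my_term_bound (A : 𝔸) (s : ℝ) (k n : ℕ) (hkn : n ≤ k) (r : ℝ) (hs : |s| ≤ r) :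
    ‖(s ^ k / (k ! : ℝ)) • A ^ n‖
      ≤ max 1 ‖(1 : 𝔸)‖ * (((r + 1) * (1 + ‖A‖)) ^ k / (k ! : ℝ)) := by
  have hr : 0 ≤ r := (abs_nonneg s).trans hs
  have hfac : (0:ℝ) < (k ! : ℝ) := by positivity
  have hM : (1:ℝ) ≤ max 1 ‖(1 : 𝔸)‖ := le_max_left _ _
  have h1 : ‖(s ^ k / (k ! : ℝ)) • A ^ n‖
      ≤ |s| ^ k / (k ! : ℝ) * (max 1 ‖(1 : 𝔸)‖ * ‖A‖ ^ n) := by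
    rw [norm_smul, Real.norm_eq_abs, abs_div, abs_pow, Nat.abs_cast]
    gcongr
    exact my_norm_pow_le A n
  refine h1.trans ?_
  have h2 : |s| ^ k * ‖A‖ ^ n ≤ ((r + 1) * (1 + ‖A‖)) ^ k := by
    have hA : ‖A‖ ^ n ≤ (1 + ‖A‖) ^ k := by
      calc ‖A‖ ^ n ≤ (1 + ‖A‖) ^ n := by gcongr; linarith [norm_nonneg A]
        _ ≤ (1 + ‖A‖) ^ k := by
            apply pow_le_pow_right₀ (by linarith [norm_nonneg A]) hkn
    calc |s| ^ k * ‖A‖ ^ n ≤ (r + 1) ^ k * (1 + ‖A‖) ^ k :=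
          mul_le_mul (pow_le_pow_left₀ (abs_nonneg s) (by linarith) k) hA
            (by positivity) (by positivity)
      _ = ((r + 1) * (1 + ‖A‖)) ^ k := (mul_pow _ _ _).symm
  have h3 : |s| ^ k / (k ! : ℝ) * (max 1 ‖(1 : 𝔸)‖ * ‖A‖ ^ n)
      = max 1 ‖(1 : 𝔸)‖ * ((|s| ^ k * ‖A‖ ^ n) / (k ! : ℝ)) := by ring
  rw [h3]
  gcongr

/-- summability of the `ch`-type series. -/
lemma my_summable_ch (A : 𝔸) (t : ℝ) :
    Summable (fun n : ℕ => (t ^ (2 * n) / ((2 * n)! : ℝ)) • A ^ n) := by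
  have hj : Function.Injective (fun n : ℕ => 2 * n) := by
    intro a b h; dsimp at h; omega
  refine Summable.of_norm_bounded
    ((my_summable_aux ((|t| + 1) * (1 + ‖A‖)) _ hj).mul_left (max 1 ‖(1 : 𝔸)‖)) ?_
  intro n
  exact my_term_bound A t (2 * n) n (by omega) |t| le_rfl

/-- summability of the `sh`-type series. -/
lemma my_summable_sh (A : 𝔸) (t : ℝ) :
    Summable (fun n : ℕ => (t ^ (2 * n + 1) / ((2 * n + 1)! : ℝ)) • A ^ n) := by
  have hj : Function.Injective (fun n : ℕ => 2 * n + 1) := by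
    intro a b h; dsimp at h; omega
  refine Summable.of_norm_bounded
    ((my_summable_aux ((|t| + 1) * (1 + ‖A‖)) _ hj).mul_left (max 1 ‖(1 : 𝔸)‖)) ?_
  intro n
  exact my_term_bound A t (2 * n + 1) n (by omega) |t| le_rfl

end Aux

section Aux2
variable {𝔸 : Type*} [NormedRing 𝔸] [NormedAlgebra ℝ 𝔸] [CompleteSpace 𝔸]

lemma my_commute_tsum {a : 𝔸} {f : ℕ → 𝔸} (hf : Summable f)
    (h : ∀ n, Commute (f n) a) : Commute (∑' n, f n) a := by
  show (∑' n, f n) * a = a * ∑' n, f n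
  rw [← hf.tsum_mul_right, ← hf.tsum_mul_left]
  exact tsum_congr fun n => h n

lemma my_ch_zero (A : 𝔸) :
    ∑' n : ℕ, ((0:ℝ) ^ (2 * n) / ((2 * n)! : ℝ)) • A ^ n = 1 := by
  rw [tsum_eq_single 0 (fun n hn => by
    have h2n : 2 * n ≠ 0 := by omega
    simp [zero_pow h2n])]
  simp

lemma my_hasDerivAt_ch (A : 𝔸) (t : ℝ) :
    HasDerivAt (fun s : ℝ => ∑' n : ℕ, (s ^ (2 * n) / ((2 * n)! : ℝ)) • A ^ n)
      ((∑' n : ℕ, (t ^ (2 * n + 1) / ((2 * n + 1)! : ℝ)) • A ^ n) * A) t := by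
  set M : ℝ := max 1 ‖(1 : 𝔸)‖ with hM
  set K : ℝ := (|t| + 1 + 1) * (1 + ‖A‖) with hK
  set g' : ℕ → ℝ → 𝔸 := fun n y =>
    (((2 * n : ℕ) : ℝ) * y ^ (2 * n - 1) / ((2 * n)! : ℝ)) • A ^ n with hg'def
  set u : ℕ → ℝ := fun n => M * (K ^ (2 * n - 1) / ((2 * n - 1)! : ℝ)) with hu
  have hj : Function.Injective (fun n : ℕ => 2 * n - 1) := by
    intro a b h; dsimp at h; omega
  have husum : Summable u := (my_summable_aux K _ hj).mul_left M
  have hcoef : ∀ (n : ℕ) (y : ℝ),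
      ((2 * (n + 1) : ℕ) : ℝ) * y ^ (2 * (n + 1) - 1) / ((2 * (n + 1))! : ℝ)
        = y ^ (2 * n + 1) / ((2 * n + 1)! : ℝ) := by
    intro n y
    have hfe : (2 * (n + 1))! = (2 * (n + 1)) * (2 * n + 1)! := by
      rw [show 2 * (n + 1) = (2 * n + 1) + 1 by ring, Nat.factorial_succ]
    have he : 2 * (n + 1) - 1 = 2 * n + 1 := by omega
    rw [hfe, he]
    have h1 : ((2 * n + 1)! : ℝ) ≠ 0 := by positivity
    have h2 : ((2 * (n + 1) : ℕ) : ℝ) ≠ 0 := by positivity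
    push_cast
    field_simp
  have hg : ∀ (n : ℕ) (y : ℝ), y ∈ Metric.ball (0:ℝ) (|t| + 1) →
      HasDerivAt (fun s : ℝ => (s ^ (2 * n) / ((2 * n)! : ℝ)) • A ^ n) (g' n y) y := by
    intro n y _
    exact ((hasDerivAt_pow (2 * n) y).div_const ((2 * n)! : ℝ)).smul_const (A ^ n)
  have hbound : ∀ (n : ℕ) (y : ℝ), y ∈ Metric.ball (0:ℝ) (|t| + 1) → ‖g' n y‖ ≤ u n := by
    intro n y hy
    have hyb : |y| ≤ |t| + 1 := by
      have := Metric.mem_ball.mp hy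
      rw [Real.dist_eq, sub_zero] at this
      linarith
    match n with
    | 0 => simp [hg'def, hu]; positivity
    | (n + 1) =>
        have : g' (n + 1) y = (y ^ (2 * n + 1) / ((2 * n + 1)! : ℝ)) • A ^ (n + 1) := by
          rw [hg'def]; dsimp only; rw [hcoef n y]
        rw [this]
        have hb := my_term_bound A y (2 * n + 1) (n + 1) (by omega) (|t| + 1) hyb
        have he : 2 * (n + 1) - 1 = 2 * n + 1 := by omega
        rw [hu]; dsimp only; rw [he]
        exact hb
  have hmem : t ∈ Metric.ball (0:ℝ) (|t| + 1) := by
    rw [Metric.mem_ball, Real.dist_eq, sub_zero]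
    linarith [abs_nonneg t]
  have hd := hasDerivAt_tsum_of_isPreconnected husum Metric.isOpen_ball
    (convex_ball (0:ℝ) (|t| + 1)).isPreconnected hg hbound hmem
    (my_summable_ch A t) hmem
  have hsum' : Summable (fun n => g' n t) :=
    Summable.of_norm_bounded husum (fun n => hbound n t hmem)
  have key : ∑' n, g' n t
      = (∑' n : ℕ, (t ^ (2 * n + 1) / ((2 * n + 1)! : ℝ)) • A ^ n) * A := by
    rw [Summable.tsum_eq_zero_add hsum']
    have h0 : g' 0 t = 0 := by simp [hg'def]
    have hsucc : ∀ n : ℕ, g' (n + 1) t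
        = ((t ^ (2 * n + 1) / ((2 * n + 1)! : ℝ)) • A ^ n) * A := by
      intro n
      rw [hg'def]; dsimp only; rw [hcoef n t, pow_succ A n, smul_mul_assoc]
    rw [h0, zero_add]
    rw [tsum_congr hsucc, (my_summable_sh A t).tsum_mul_right]
  rw [key] at hd
  exact hd
end Aux2

set_option synthInstance.maxHeartbeats 1000000

/-- **R-component of Theorem 4 of the paper (D = 0).**
On a real separable Hilbert space, for commuting bounded operators `B`, `C`, with
`ch(t) = ∑ t^{2n}(CB)ⁿ/(2n)!` and `sh(t) = ∑ t^{2n+1}(CB)ⁿ/(2n+1)!` and `ch(t)`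
invertible for all `t`, the functions `Q(t) = sh(t) ∘ ch(t)⁻¹ ∘ B` and `R(t) = ch(t)⁻¹`
satisfy `R(0) = I` and `R'(t) = −Q(t) ∘ C ∘ R(t)`. -/
theorem mehler_solution_R_component
    {H : Type*} [NormedAddCommGroup H] [InnerProductSpace ℝ H] [CompleteSpace H]
    [TopologicalSpace.SeparableSpace H]
    (B C : H →L[ℝ] H) (hBC : B ∘L C = C ∘L B)
    (ch sh : ℝ → (H →L[ℝ] H))
    (hch : ch = fun t : ℝ =>
      ∑' n : ℕ, (t ^ (2 * n) / (Nat.factorial (2 * n) : ℝ)) • (C ∘L B) ^ n)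
    (hsh : sh = fun t : ℝ =>
      ∑' n : ℕ, (t ^ (2 * n + 1) / (Nat.factorial (2 * n + 1) : ℝ)) • (C ∘L B) ^ n)
    (hunit : ∀ t : ℝ, IsUnit (ch t))
    (Q R : ℝ → (H →L[ℝ] H))
    (hQ : Q = fun t : ℝ => sh t ∘L Ring.inverse (ch t) ∘L B)
    (hR : R = fun t : ℝ => Ring.inverse (ch t)) :
    R 0 = 1 ∧ ∀ t : ℝ, HasDerivAt R (-(Q t ∘L C ∘L R t)) t := by
  set A : H →L[ℝ] H := C ∘L B with hA
  have hBCA : B * C = A := by rw [hA, ← ContinuousLinearMap.mul_def] at hBC ⊢; exact hBC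
  constructor
  · rw [hR, hch]
    simp only
    rw [my_ch_zero A, Ring.inverse_one]
  · intro t
    -- derivative of ch
    have hdc : HasDerivAt ch (sh t * A) t := by
      rw [hch, hsh]
      exact my_hasDerivAt_ch A t
    obtain ⟨u, hu⟩ := hunit t
    -- derivative of R
    have hinv : HasDerivAt R
        (-(Ring.inverse (ch t) * (sh t * A) * Ring.inverse (ch t))) t := by
      have h1 : HasFDerivAt Ring.inverse
          (-(ContinuousLinearMap.mulLeftRight ℝ (H →L[ℝ] H) ↑u⁻¹ ↑u⁻¹)) (ch t) := by
        rw [← hu]; exact hasFDerivAt_ringInverse u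
      have h2 := h1.comp_hasDerivAt t hdc
      have h3 : (Ring.inverse ∘ ch) = R := by rw [hR]; rfl
      have h4 : Ring.inverse (ch t) = (↑u⁻¹ : H →L[ℝ] H) := by
        rw [← hu, Ring.inverse_unit]
      rw [h3] at h2
      convert h2 using 1
      · rfl
      · rfl
      · rfl
      simp [h4]
    -- commutation
    have hsha : ∀ n : ℕ, Commute (sh t) (A ^ n) := by
      intro n
      rw [hsh]
      exact my_commute_tsum (my_summable_sh A t)
        (fun m => ((Commute.refl A).pow_pow m n).smul_left _)
    have hchsh : Commute (ch t) (sh t) := by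
      rw [hch]
      exact my_commute_tsum (my_summable_ch A t)
        (fun n => ((hsha n).symm.smul_left _))
    have hcomm : Commute (Ring.inverse (ch t)) (sh t) := by
      rw [← hu, Ring.inverse_unit]
      exact (hu ▸ hchsh).units_inv_left
    -- identify the derivative
    have halg : -(Ring.inverse (ch t) * (sh t * A) * Ring.inverse (ch t))
        = -(Q t ∘L C ∘L R t) := by
      rw [hQ, hR]
      simp only [← ContinuousLinearMap.mul_def]
      have e1 : Ring.inverse (ch t) * (sh t * A) * Ring.inverse (ch t)
          = sh t * (Ring.inverse (ch t) * (A * Ring.inverse (ch t))) := by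
        rw [← mul_assoc, ← mul_assoc, hcomm.eq, mul_assoc, mul_assoc]
      rw [e1]
      congr 1
      rw [← hBCA]
      simp only [mul_assoc]
    rw [← halg]
    exact hinv
end

section
/- Let H be a real separable Hilbert space and let B, C be bounded self-adjoint linear operators on H with B∘C = C∘B. For t ∈ ℝ set ch(t) = ∑_{n=0}^∞ t^{2n}(C∘B)ⁿ/(2n)! and sh(t) = ∑_{n=0}^∞ t^{2n+1}(C∘B)ⁿ/(2n+1)!, assume ch(t) is invertible for every t, and define P(t) = C ∘ sh(t) ∘ ch(t)⁻¹ and R(t) = ch(t)⁻¹. Then P(0) = 0 and t ↦ P(t) is differentiable with P'(t) = R(t)* ∘ C ∘ R(t) for all t, where R(t)* denotes the Hilbert-space adjoint of R(t). -/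
open scoped Nat

section Aux

variable {𝔸 : Type*} [NormedRing 𝔸] [NormedAlgebra ℝ 𝔸] [CompleteSpace 𝔸]

/-- `cosh`-type operator series. -/
noncomputable def chT (A : 𝔸) (t : ℝ) : 𝔸 :=
  ∑' n : ℕ, (t ^ (2 * n) / (Nat.factorial (2 * n) : ℝ)) • A ^ n

/-- `sinh`-type operator series. -/
noncomputable def shT (A : 𝔸) (t : ℝ) : 𝔸 :=
  ∑' n : ℕ, (t ^ (2 * n + 1) / (Nat.factorial (2 * n + 1) : ℝ)) • A ^ n

lemma norm_pow_le_max (A : 𝔸) (n : ℕ) : ‖A ^ n‖ ≤ max ‖(1 : 𝔸)‖ 1 * ‖A‖ ^ n := by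
  cases n with
  | zero => simpa using le_max_left ‖(1:𝔸)‖ 1
  | succ n =>
    calc ‖A ^ (n+1)‖ ≤ ‖A‖ ^ (n+1) := norm_pow_le' A n.succ_pos
    _ ≤ max ‖(1:𝔸)‖ 1 * ‖A‖ ^ (n+1) :=
        le_mul_of_one_le_left (by positivity) (le_max_right _ _)

lemma aux_bound (A : 𝔸) {r y : ℝ} (hr : 1 ≤ r) (hy : |y| ≤ r) {n k : ℕ}
    (hnk : n ≤ k) (hk : k ≤ 2 * n + 1) :
    ‖(y ^ k / (Nat.factorial k : ℝ)) • A ^ n‖ ≤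
      max ‖(1 : 𝔸)‖ 1 * r * ((r ^ 2 * ‖A‖) ^ n / (Nat.factorial n : ℝ)) := by
  have h0 : (0:ℝ) < n ! := by exact_mod_cast n.factorial_pos
  have hr0 : (0:ℝ) ≤ r := le_trans zero_le_one hr
  calc ‖(y ^ k / (k ! : ℝ)) • A ^ n‖ = |y|^k / (k ! : ℝ) * ‖A ^ n‖ := by
        rw [norm_smul, Real.norm_eq_abs, abs_div, abs_pow, Nat.abs_cast]
    _ ≤ r ^ (2*n+1) / (n ! : ℝ) * (max ‖(1:𝔸)‖ 1 * ‖A‖ ^ n) := by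
        have h1 : |y|^k ≤ r ^ (2*n+1) := by
          calc |y|^k ≤ r ^ k := pow_le_pow_left₀ (abs_nonneg y) hy k
          _ ≤ r ^ (2*n+1) := pow_le_pow_right₀ hr hk
        have h2 : (n ! : ℝ) ≤ (k ! : ℝ) := by exact_mod_cast Nat.factorial_le hnk
        have h3 := norm_pow_le_max A n
        gcongr
    _ = max ‖(1 : 𝔸)‖ 1 * r * ((r ^ 2 * ‖A‖) ^ n / (n ! : ℝ)) := by
        rw [mul_pow]; ring

lemma summable_aux (A : 𝔸) (r : ℝ) :
    Summable (fun n : ℕ => max ‖(1 : 𝔸)‖ 1 * r * ((r ^ 2 * ‖A‖) ^ n / (n ! : ℝ))) :=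
  (Real.summable_pow_div_factorial _).mul_left _

lemma one_le_abs_add_one (t : ℝ) : (1:ℝ) ≤ |t| + 1 := by
  have := abs_nonneg t; linarith

lemma summable_chT_term (A : 𝔸) (t : ℝ) :
    Summable (fun n : ℕ => (t ^ (2*n) / (Nat.factorial (2*n) : ℝ)) • A ^ n) := by
  apply Summable.of_norm_bounded (summable_aux A (|t|+1))
  intro n
  exact aux_bound A (one_le_abs_add_one t) (by linarith [abs_nonneg t]) (by omega) (by omega)

lemma summable_shT_term (A : 𝔸) (t : ℝ) :
    Summable (fun n : ℕ => (t ^ (2*n+1) / (Nat.factorial (2*n+1) : ℝ)) • A ^ n) := by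
  apply Summable.of_norm_bounded (summable_aux A (|t|+1))
  intro n
  exact aux_bound A (one_le_abs_add_one t) (by linarith [abs_nonneg t]) (by omega) (by omega)

lemma Commute.tsum_right' {X : 𝔸} {g : ℕ → 𝔸} (hg : Summable g) (h : ∀ n, Commute X (g n)) :
    Commute X (∑' n, g n) := by
  show X * ∑' n, g n = (∑' n, g n) * X
  rw [← hg.tsum_mul_left X, ← hg.tsum_mul_right X]
  exact tsum_congr h

lemma commute_chT {X : 𝔸} {A : 𝔸} (h : Commute X A) (t : ℝ) : Commute X (chT A t) :=
  Commute.tsum_right' (summable_chT_term A t) fun n => ((h.pow_right n).smul_right _)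

lemma commute_shT {X : 𝔸} {A : 𝔸} (h : Commute X A) (t : ℝ) : Commute X (shT A t) :=
  Commute.tsum_right' (summable_shT_term A t) fun n => ((h.pow_right n).smul_right _)

lemma Commute.ring_inverse_right {M : Type*} [MonoidWithZero M] {x y : M} (hy : IsUnit y)
    (h : Commute x y) : Commute x (Ring.inverse y) := by
  obtain ⟨u, rfl⟩ := hy
  rw [Ring.inverse_unit]
  exact h.units_inv_right

lemma hasDerivAt_shT (A : 𝔸) (t : ℝ) : HasDerivAt (shT A) (chT A t) t := by
  have hr1 : (1:ℝ) ≤ |t| + 1 := one_le_abs_add_one t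
  have htmem : t ∈ Set.Ioo (-(|t|+1)) (|t|+1) :=
    ⟨by linarith [neg_abs_le t, abs_nonneg t], by linarith [le_abs_self t]⟩
  have hg : ∀ (n : ℕ) (y : ℝ), y ∈ Set.Ioo (-(|t|+1)) (|t|+1) →
      HasDerivAt (fun s : ℝ => (s ^ (2*n+1) / (Nat.factorial (2*n+1) : ℝ)) • A ^ n)
        ((y ^ (2*n) / (Nat.factorial (2*n) : ℝ)) • A ^ n) y := by
    intro n y _
    have h := ((hasDerivAt_pow (2*n+1) y).div_const ((Nat.factorial (2*n+1) : ℝ))).smul_const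
      (A ^ n)
    convert h using 2
    · rfl
    have hfac : (Nat.factorial (2*n+1) : ℝ) = (2*n+1) * (Nat.factorial (2*n) : ℝ) := by
      exact_mod_cast congrArg (Nat.cast (R := ℝ)) (Nat.factorial_succ (2*n))
    rw [hfac]
    push_cast
    field_simp
  have hb : ∀ (n : ℕ) (y : ℝ), y ∈ Set.Ioo (-(|t|+1)) (|t|+1) →
      ‖(y ^ (2*n) / (Nat.factorial (2*n) : ℝ)) • A ^ n‖ ≤
        max ‖(1 : 𝔸)‖ 1 * (|t|+1) * (((|t|+1) ^ 2 * ‖A‖) ^ n / (n ! : ℝ)) := by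
    intro n y hy
    have hy' : |y| ≤ |t| + 1 := by
      rw [abs_le]; exact ⟨le_of_lt hy.1, le_of_lt hy.2⟩
    exact aux_bound A hr1 hy' (by omega) (by omega)
  exact hasDerivAt_tsum_of_isPreconnected (summable_aux A (|t|+1)) isOpen_Ioo
    isPreconnected_Ioo hg hb htmem (summable_shT_term A t) htmem

lemma hasDerivAt_chT (A : 𝔸) (t : ℝ) : HasDerivAt (chT A) (A * shT A t) t := by
  have hr1 : (1:ℝ) ≤ |t| + 1 := one_le_abs_add_one t
  have htmem : t ∈ Set.Ioo (-(|t|+1)) (|t|+1) :=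
    ⟨by linarith [neg_abs_le t, abs_nonneg t], by linarith [le_abs_self t]⟩
  have hco : ∀ (m : ℕ) (y : ℝ), (((2*(m+1) : ℕ) : ℝ) * y ^ (2*(m+1)-1) / (Nat.factorial (2*(m+1)) : ℝ))
      = y ^ (2*m+1) / (Nat.factorial (2*m+1) : ℝ) := by
    intro m y
    have hfac : (Nat.factorial (2*(m+1)) : ℝ)
        = (2*(m+1)) * (Nat.factorial (2*m+1) : ℝ) := by
      exact_mod_cast congrArg (Nat.cast (R := ℝ)) (Nat.factorial_succ (2*m+1))
    have h2 : (2*(m+1)-1 : ℕ) = 2*m+1 := by omega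
    rw [hfac, h2]
    have hne : ((2*(m+1) : ℕ) : ℝ) ≠ 0 := by positivity
    push_cast
    field_simp
  have hbound : ∀ (n : ℕ) (y : ℝ), |y| ≤ |t| + 1 →
      ‖(((2*n : ℕ) : ℝ) * y ^ (2*n-1) / (Nat.factorial (2*n) : ℝ)) • A ^ n‖ ≤
        max ‖(1 : 𝔸)‖ 1 * (|t|+1) * (((|t|+1) ^ 2 * ‖A‖) ^ n / (n ! : ℝ)) := by
    intro n y hy'
    cases n with
    | zero => simp; positivity
    | succ m =>
      rw [hco m y]
      exact aux_bound A hr1 hy' (by omega) (by omega)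
  have hsum' : Summable (fun n : ℕ =>
      (((2*n : ℕ) : ℝ) * t ^ (2*n-1) / (Nat.factorial (2*n) : ℝ)) • A ^ n) := by
    apply Summable.of_norm_bounded (summable_aux A (|t|+1))
    intro n
    exact hbound n t (by linarith [abs_nonneg t])
  have hg : ∀ (n : ℕ) (y : ℝ), y ∈ Set.Ioo (-(|t|+1)) (|t|+1) →
      HasDerivAt (fun s : ℝ => (s ^ (2*n) / (Nat.factorial (2*n) : ℝ)) • A ^ n)
        ((((2*n : ℕ) : ℝ) * y ^ (2*n-1) / (Nat.factorial (2*n) : ℝ)) • A ^ n) y := by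
    intro n y _
    exact ((hasDerivAt_pow (2*n) y).div_const ((Nat.factorial (2*n) : ℝ))).smul_const (A ^ n)
  have hb : ∀ (n : ℕ) (y : ℝ), y ∈ Set.Ioo (-(|t|+1)) (|t|+1) →
      ‖(((2*n : ℕ) : ℝ) * y ^ (2*n-1) / (Nat.factorial (2*n) : ℝ)) • A ^ n‖ ≤
        max ‖(1 : 𝔸)‖ 1 * (|t|+1) * (((|t|+1) ^ 2 * ‖A‖) ^ n / (n ! : ℝ)) := by
    intro n y hy
    have hy' : |y| ≤ |t| + 1 := by
      rw [abs_le]; exact ⟨le_of_lt hy.1, le_of_lt hy.2⟩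
    exact hbound n y hy'
  have key : HasDerivAt (fun s : ℝ => ∑' n : ℕ, (s ^ (2*n) / (Nat.factorial (2*n) : ℝ)) • A ^ n)
      (∑' n : ℕ, (((2*n : ℕ) : ℝ) * t ^ (2*n-1) / (Nat.factorial (2*n) : ℝ)) • A ^ n) t :=
    hasDerivAt_tsum_of_isPreconnected (summable_aux A (|t|+1)) isOpen_Ioo
      isPreconnected_Ioo hg hb htmem (summable_chT_term A t) htmem
  have heq : (∑' n : ℕ, (((2*n : ℕ) : ℝ) * t ^ (2*n-1) / (Nat.factorial (2*n) : ℝ)) • A ^ n)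
      = A * shT A t := by
    rw [Summable.tsum_eq_zero_add hsum']
    have h0 : ((((2*0 : ℕ) : ℝ)) * t ^ (2*0-1) / (Nat.factorial (2*0) : ℝ)) • A ^ 0 = 0 := by
      norm_num
    rw [h0, zero_add]
    rw [shT, ← (summable_shT_term A t).tsum_mul_left A]
    apply tsum_congr
    intro n
    rw [hco n t, mul_smul_comm, ← pow_succ']
  rw [← heq]
  exact key

lemma chT_zero (A : 𝔸) : chT A 0 = 1 := by
  rw [chT, tsum_eq_single 0]
  · norm_num
  · intro n hn
    have : (2*n) ≠ 0 := by omega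
    simp [zero_pow this]

lemma shT_zero (A : 𝔸) : shT A 0 = 0 := by
  rw [shT]
  convert tsum_zero with n
  simp

lemma chT_sq_sub (A : 𝔸) (t : ℝ) :
    chT A t * chT A t - A * (shT A t * shT A t) = 1 := by
  have key : ∀ s : ℝ, HasDerivAt (fun y => chT A y * chT A y - A * (shT A y * shT A y)) 0 s := by
    intro s
    have hc := hasDerivAt_chT A s
    have hs := hasDerivAt_shT A s
    have H := (hc.mul hc).sub ((hs.mul hs).const_mul A)
    convert H using 1
    · rfl
    · rfl
    have h1 : Commute A (chT A s) := commute_chT (Commute.refl A) s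
    have h3 : Commute (chT A s) (shT A s) := commute_shT h1.symm s
    have e1 : chT A s * (A * shT A s) = A * (shT A s * chT A s) := by
      rw [← mul_assoc, ← h1.eq, mul_assoc, h3.eq]
    have e2 : A * shT A s * chT A s = A * (shT A s * chT A s) := mul_assoc _ _ _
    rw [mul_add, e1, e2, h3.eq]
    abel
  have hconst := is_const_of_deriv_eq_zero
    (f := fun y => chT A y * chT A y - A * (shT A y * shT A y))
    (fun s => (key s).differentiableAt) (fun s => (key s).deriv) t 0
  simp only [chT_zero, shT_zero, mul_zero, mul_one, sub_zero, one_mul] at hconst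
  exact hconst

end Aux

section Star

variable {H : Type*} [NormedAddCommGroup H] [InnerProductSpace ℝ H] [CompleteSpace H]

lemma isSelfAdjoint_chT {A : H →L[ℝ] H} (hA : IsSelfAdjoint A) (t : ℝ) :
    IsSelfAdjoint (chT A t) := by
  show star (chT A t) = chT A t
  rw [chT, tsum_star]
  apply tsum_congr
  intro n
  rw [star_smul, star_pow, hA.star_eq, star_trivial]

end Star

/-- **P-component of Theorem 4 of the paper (D = 0).**
On a real separable Hilbert space, for commuting bounded *self-adjoint* operators `B`, `C`,
with `ch(t) = ∑ t^{2n}(CB)ⁿ/(2n)!`, `sh(t) = ∑ t^{2n+1}(CB)ⁿ/(2n+1)!` and `ch(t)`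
invertible for all `t`, the functions `P(t) = C ∘ sh(t) ∘ ch(t)⁻¹` and `R(t) = ch(t)⁻¹`
satisfy `P(0) = 0` and `P'(t) = R(t)* ∘ C ∘ R(t)`. -/
theorem mehler_solution_P_component
    {H : Type*} [NormedAddCommGroup H] [InnerProductSpace ℝ H] [CompleteSpace H]
    [TopologicalSpace.SeparableSpace H]
    (B C : H →L[ℝ] H) (hBsa : IsSelfAdjoint B) (hCsa : IsSelfAdjoint C)
    (hBC : B ∘L C = C ∘L B)
    (ch sh : ℝ → (H →L[ℝ] H))
    (hch : ch = fun t : ℝ =>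
      ∑' n : ℕ, (t ^ (2 * n) / (Nat.factorial (2 * n) : ℝ)) • (C ∘L B) ^ n)
    (hsh : sh = fun t : ℝ =>
      ∑' n : ℕ, (t ^ (2 * n + 1) / (Nat.factorial (2 * n + 1) : ℝ)) • (C ∘L B) ^ n)
    (hunit : ∀ t : ℝ, IsUnit (ch t))
    (P R : ℝ → (H →L[ℝ] H))
    (hP : P = fun t : ℝ => C ∘L sh t ∘L Ring.inverse (ch t))
    (hR : R = fun t : ℝ => Ring.inverse (ch t)) :
    P 0 = 0 ∧
    ∀ t : ℝ, HasDerivAt P (ContinuousLinearMap.adjoint (R t) ∘L C ∘L R t) t := by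
  set A : H →L[ℝ] H := C ∘L B with hA
  have hch' : ch = chT A := hch
  have hsh' : sh = shT A := hsh
  have hBC' : B * C = C * B := hBC
  have hAsa : IsSelfAdjoint A := by
    show star (C * B) = C * B
    rw [star_mul, hBsa.star_eq, hCsa.star_eq]
    exact hBC'
  have hCA : Commute C A := by
    show C * (C * B) = (C * B) * C
    rw [mul_assoc, hBC']
  constructor
  · simp only [hP, hsh', shT_zero]
    simp
  · intro t
    have hu : IsUnit (chT A t) := by rw [← hch']; exact hunit t
    set ct := chT A t with hct
    set st := shT A t with hst
    set iv := Ring.inverse (chT A t) with hiv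
    -- commutation facts
    have hAc : Commute A ct := commute_chT (Commute.refl A) t
    have hAs : Commute A st := commute_shT (Commute.refl A) t
    have hCc : Commute C ct := commute_chT hCA t
    have hCs : Commute C st := commute_shT hCA t
    have hcs : Commute ct st := commute_shT hAc.symm t
    have hCiv : Commute C iv := hCc.ring_inverse_right hu
    have hAiv : Commute A iv := hAc.ring_inverse_right hu
    have hsiv : Commute st iv := (hcs.symm.ring_inverse_right hu)
    have h1 : ct * iv = 1 := Ring.mul_inverse_cancel _ hu
    -- derivative of the inverse
    have hivu : ((hu.unit⁻¹ : (H →L[ℝ] H)ˣ) : H →L[ℝ] H) = iv := by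
      rw [hiv, ← Ring.inverse_unit hu.unit, hu.unit_spec]
    have hinv : HasDerivAt (fun s => Ring.inverse (chT A s)) (-(iv * (A * st) * iv)) t := by
      have hF := hasFDerivAt_ringInverse (𝕜 := ℝ) (R := H →L[ℝ] H) hu.unit
      rw [hu.unit_spec] at hF
      have hcomp := hF.comp_hasDerivAt t (hasDerivAt_chT A t)
      convert hcomp using 1
      · rfl
      · rfl
      · rfl
      · rfl
      rw [ContinuousLinearMap.neg_apply, ContinuousLinearMap.mulLeftRight_apply, hivu]
    have hDP : HasDerivAt (fun s => C * (shT A s * Ring.inverse (chT A s)))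
        (C * (ct * iv + st * -(iv * (A * st) * iv))) t :=
      ((hasDerivAt_shT A t).mul hinv).const_mul C
    -- the function in hDP is P
    have hPfun : P = fun s => C * (shT A s * Ring.inverse (chT A s)) := by
      rw [hP, hsh', hch']; rfl
    rw [hPfun]
    -- adjoint (R t) = R t
    have hRt : R t = iv := by
      rw [hR, hch']
    have hivsa : IsSelfAdjoint iv := by
      show star iv = iv
      rw [hiv, ← Ring.inverse_star, (isSelfAdjoint_chT hAsa t).star_eq]
    have hadj : ContinuousLinearMap.adjoint (R t) = iv := by
      rw [← ContinuousLinearMap.star_eq_adjoint, hRt, hivsa.star_eq]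
    have htarget : ContinuousLinearMap.adjoint (R t) ∘L C ∘L R t
        = C * (ct * iv + st * -(iv * (A * st) * iv)) := by
      have lhs_eq : ContinuousLinearMap.adjoint (R t) ∘L C ∘L R t = iv * (C * iv) := by
        rw [hadj, hRt]; rfl
      rw [lhs_eq]
      -- key algebraic identity
      have hid := chT_sq_sub A t
      have hmain : ct * iv + st * -(iv * (A * st) * iv) = iv * iv := by
        have hAsiv : Commute (A * st) iv := Commute.mul_left hAiv hsiv
        have e3 : st * (iv * (A * st) * iv) = A * (st * st) * (iv * iv) := by
          calc st * (iv * (A * st) * iv) = st * ((A * st) * iv * iv) := by rw [← hAsiv.eq]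
          _ = st * (A * st) * (iv * iv) := by rw [mul_assoc (A*st) iv iv, ← mul_assoc]
          _ = A * (st * st) * (iv * iv) := by
              rw [← mul_assoc st A st, ← hAs.eq, mul_assoc A st st]
        have e4 : ct * ct * (iv * iv) = 1 := by
          calc ct * ct * (iv * iv) = ct * ((ct * iv) * iv) := by
                rw [mul_assoc, mul_assoc]
          _ = 1 := by rw [h1, one_mul, h1]
        have e5 : (1 : H →L[ℝ] H) - A * (st * st) * (iv * iv) = iv * iv := by
          have h6 := congrArg (fun x => x * (iv * iv)) hid
          simp only [sub_mul, one_mul] at h6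
          rw [e4] at h6
          exact h6
        rw [h1, mul_neg, e3, ← sub_eq_add_neg, e5]
      rw [hmain]
      -- iv * (C * iv) = C * (iv * iv)
      rw [← mul_assoc, ← hCiv.eq, mul_assoc]
    rw [htarget]
    exact hDP
end

section
/- Let B and C be commuting symmetric positive-semidefinite n×n real matrices and α ∈ ℝ. For t ∈ ℝ set ch(t) = ∑_{m=0}^∞ t^{2m}(CB)ᵐ/(2m)! and sh(t) = ∑_{m=0}^∞ t^{2m+1}(CB)ᵐ/(2m+1)!, and assume ch(t) is positive definite for every t; define Q(t) = sh(t)·ch(t)⁻¹·B and s(t) = e^{αt}·(det ch(t))^{−1/2}. Then s(0) = 1 and t ↦ s(t) is differentiable with s'(t) = −½ tr(C·Q(t))·s(t) + α·s(t) for all t. -/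
open Matrix


lemma summable_mul_pow_div_factorial (z : ℝ) :
    Summable (fun m : ℕ => (m : ℝ) * z ^ m / m.factorial) := by
  rw [← summable_nat_add_iff 1]
  have h : (fun m : ℕ => ((m + 1 : ℕ) : ℝ) * z ^ (m + 1) / (m + 1).factorial)
      = fun m : ℕ => z * (z ^ m / m.factorial) := by
    funext m
    rw [Nat.factorial_succ]
    have h2 : (m.factorial : ℝ) ≠ 0 := Nat.cast_ne_zero.2 m.factorial_ne_zero
    push_cast
    field_simp
    ring
  rw [h]
  exact (Real.summable_pow_div_factorial z).mul_left z

lemma entry_bound {n : ℕ} (A : Matrix (Fin n) (Fin n) ℝ) (m : ℕ) (i j : Fin n) :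
    |(A ^ m) i j| ≤ (1 + ∑ p, ∑ q, |A p q|) ^ m := by
  have hS : (0:ℝ) ≤ ∑ p, ∑ q, |A p q| := by positivity
  induction m generalizing i j with
  | zero =>
    simp only [pow_zero, Matrix.one_apply]
    split <;> simp
  | succ m ih =>
    rw [pow_succ, Matrix.mul_apply]
    calc |∑ k, (A ^ m) i k * A k j| ≤ ∑ k, |(A ^ m) i k * A k j| := Finset.abs_sum_le_sum_abs _ _
      _ ≤ ∑ k, (1 + ∑ p, ∑ q, |A p q|) ^ m * |A k j| := by
          refine Finset.sum_le_sum fun k _ => ?_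
          rw [abs_mul]
          exact mul_le_mul_of_nonneg_right (ih i k) (abs_nonneg _)
      _ = (1 + ∑ p, ∑ q, |A p q|) ^ m * ∑ k, |A k j| := by rw [Finset.mul_sum]
      _ ≤ (1 + ∑ p, ∑ q, |A p q|) ^ m * (1 + ∑ p, ∑ q, |A p q|) := by
          refine mul_le_mul_of_nonneg_left ?_ (by positivity)
          have : ∑ k, |A k j| ≤ ∑ p, ∑ q, |A p q| := by
            refine Finset.sum_le_sum fun k _ => ?_
            exact Finset.single_le_sum (f := fun q => |A k q|) (fun q _ => abs_nonneg _)
              (Finset.mem_univ j)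
          linarith
      _ = (1 + ∑ p, ∑ q, |A p q|) ^ (m + 1) := by rw [pow_succ]

lemma summable_entry {n : ℕ} (A : Matrix (Fin n) (Fin n) ℝ) (i j : Fin n) (y : ℝ)
    (c : ℕ → ℕ) (hinj : Function.Injective c) (hle : ∀ m, m ≤ c m) :
    Summable (fun m : ℕ => (y ^ c m / ((c m).factorial : ℝ)) * (A ^ m) i j) := by
  set K : ℝ := 1 + ∑ p, ∑ q, |A p q| with hK
  have hS : (0:ℝ) ≤ ∑ p, ∑ q, |A p q| := by positivity
  have hK1 : (1:ℝ) ≤ K := by linarith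
  set x : ℝ := (|y| + 1) * K with hx
  refine Summable.of_norm_bounded (g := fun m => x ^ c m / ((c m).factorial : ℝ))
    ((Real.summable_pow_div_factorial x).comp_injective hinj) fun m => ?_
  have h1 : |(A ^ m) i j| ≤ K ^ c m :=
    le_trans (entry_bound A m i j) (pow_le_pow_right₀ hK1 (hle m))
  have h2 : |y| ^ c m ≤ (|y| + 1) ^ c m :=
    pow_le_pow_left₀ (abs_nonneg y) (by linarith) _
  have hfac : (0:ℝ) < ((c m).factorial : ℝ) := by positivity
  rw [Real.norm_eq_abs, abs_mul, abs_div, abs_pow, Nat.abs_cast]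
  have key : |y| ^ c m * |(A ^ m) i j| ≤ x ^ c m := by
    calc |y| ^ c m * |(A ^ m) i j| ≤ (|y| + 1) ^ c m * K ^ c m :=
          mul_le_mul h2 h1 (abs_nonneg _) (by positivity)
      _ = x ^ c m := by rw [hx, mul_pow]
  calc |y| ^ c m / ((c m).factorial : ℝ) * |(A ^ m) i j|
      = |y| ^ c m * |(A ^ m) i j| / ((c m).factorial : ℝ) := by ring
    _ ≤ x ^ c m / ((c m).factorial : ℝ) := by gcongr

lemma hasDerivAt_ch_entry {n : ℕ} (A : Matrix (Fin n) (Fin n) ℝ) (i j : Fin n) (t : ℝ) :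
    HasDerivAt (fun y : ℝ => ∑' m : ℕ, (y ^ (2*m) / ((2*m).factorial : ℝ)) * (A ^ m) i j)
      (∑' m : ℕ, (t ^ (2*m+1) / ((2*m+1).factorial : ℝ)) * (A ^ (m+1)) i j) t := by
  set K : ℝ := 1 + ∑ p, ∑ q, |A p q| with hK
  have hS : (0:ℝ) ≤ ∑ p, ∑ q, |A p q| := by positivity
  have hK1 : (1:ℝ) ≤ K := by linarith
  set R : ℝ := |t| + 1 with hR
  have habs := abs_nonneg t
  have hR1 : (1:ℝ) ≤ R := by linarith
  set x : ℝ := R * K with hx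
  have hx1 : (1:ℝ) ≤ x := one_le_mul_of_one_le_of_one_le hR1 hK1
  set g' : ℕ → ℝ → ℝ := fun m y =>
    ((2*m : ℕ) : ℝ) * y ^ (2*m - 1) / ((2*m).factorial : ℝ) * ((A ^ m) i j) with hg'def
  set u : ℕ → ℝ := fun m => ((2*m : ℕ) : ℝ) * x ^ (2*m) / ((2*m).factorial : ℝ) with hu_def
  have hu : Summable u := by
    exact (summable_mul_pow_div_factorial x).comp_injective
      (i := fun m : ℕ => 2*m) (fun a b h => by dsimp at h; omega)
  have hg : ∀ (m : ℕ) (y : ℝ), y ∈ Metric.ball (0:ℝ) R →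
      HasDerivAt (fun y : ℝ => (y ^ (2*m) / ((2*m).factorial : ℝ)) * (A ^ m) i j) (g' m y) y := by
    intro m y _
    exact ((hasDerivAt_pow (2*m) y).div_const ((2*m).factorial : ℝ)).mul_const ((A ^ m) i j)
  have hb : ∀ (m : ℕ) (y : ℝ), y ∈ Metric.ball (0:ℝ) R → ‖g' m y‖ ≤ u m := by
    intro m y hy
    have hyR : |y| ≤ R := by
      have := Metric.mem_ball.1 hy
      rw [Real.dist_eq, sub_zero] at this
      linarith
    cases m with
    | zero => simp [hg'def, hu_def]
    | succ k =>
      have hfac : (0:ℝ) < (((2*(k+1)).factorial : ℕ) : ℝ) := by positivity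
      rw [hg'def, hu_def, Real.norm_eq_abs, abs_mul, abs_div, abs_mul, abs_pow, Nat.abs_cast,
        Nat.abs_cast]
      have key : |y| ^ (2*(k+1) - 1) * |(A ^ (k+1)) i j| ≤ x ^ (2*(k+1)) := by
        have h1 : |y| ^ (2*(k+1) - 1) ≤ R ^ (2*(k+1) - 1) :=
          pow_le_pow_left₀ (abs_nonneg y) hyR _
        have h2 : |(A ^ (k+1)) i j| ≤ K ^ (2*(k+1) - 1) :=
          le_trans (entry_bound A (k+1) i j) (pow_le_pow_right₀ hK1 (by omega))
        calc |y| ^ (2*(k+1) - 1) * |(A ^ (k+1)) i j|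
            ≤ R ^ (2*(k+1) - 1) * K ^ (2*(k+1) - 1) :=
              mul_le_mul h1 h2 (abs_nonneg _) (by positivity)
          _ = x ^ (2*(k+1) - 1) := by rw [hx, mul_pow]
          _ ≤ x ^ (2*(k+1)) := pow_le_pow_right₀ hx1 (by omega)
      calc ((2*(k+1) : ℕ) : ℝ) * |y| ^ (2*(k+1) - 1) / ((2*(k+1)).factorial : ℝ)
            * |(A ^ (k+1)) i j|
          = ((2*(k+1) : ℕ) : ℝ) * (|y| ^ (2*(k+1) - 1) * |(A ^ (k+1)) i j|)
            / ((2*(k+1)).factorial : ℝ) := by ring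
        _ ≤ ((2*(k+1) : ℕ) : ℝ) * x ^ (2*(k+1)) / ((2*(k+1)).factorial : ℝ) := by gcongr
  have hg0 : Summable (fun m => ((0:ℝ) ^ (2*m) / ((2*m).factorial : ℝ)) * (A ^ m) i j) := by
    refine summable_of_ne_finset_zero (s := {0}) fun m hm => ?_
    have hm0 : m ≠ 0 := by simpa using hm
    rw [zero_pow (by omega), zero_div, zero_mul]
  have htmem : t ∈ Metric.ball (0:ℝ) R := by
    rw [Metric.mem_ball, Real.dist_eq, sub_zero]; linarith
  have main := hasDerivAt_tsum_of_isPreconnected hu Metric.isOpen_ball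
    (convex_ball (0:ℝ) R).isPreconnected hg hb (Metric.mem_ball_self (by linarith)) hg0 htmem
  have hsumd : Summable (fun m => g' m t) :=
    Summable.of_norm_bounded (g := u) hu (fun m => hb m t htmem)
  have hval : ∑' m, g' m t = ∑' m : ℕ, (t ^ (2*m+1) / ((2*m+1).factorial : ℝ)) * (A ^ (m+1)) i j := by
    rw [Summable.tsum_eq_zero_add hsumd]
    have h0 : g' 0 t = 0 := by simp [hg'def]
    rw [h0, zero_add]
    refine tsum_congr fun k => ?_
    show ((2*(k+1) : ℕ) : ℝ) * t ^ (2*(k+1) - 1) / ((2*(k+1)).factorial : ℝ) * ((A ^ (k+1)) i j)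
      = _
    have hsub : 2*(k+1) - 1 = 2*k+1 := by omega
    have hfs : ((2*(k+1)).factorial : ℝ) = ((2*k+2 : ℕ) : ℝ) * ((2*k+1).factorial : ℝ) := by
      have h4 : 2*(k+1) = (2*k+1)+1 := by omega
      rw [h4, Nat.factorial_succ]
      push_cast
      ring
    rw [hsub, hfs]
    have hne : ((2*k+1).factorial : ℝ) ≠ 0 := Nat.cast_ne_zero.2 (Nat.factorial_ne_zero _)
    have hne2 : ((2*k+2 : ℕ) : ℝ) ≠ 0 := by positivity
    push_cast
    field_simp
  rw [hval] at main
  exact main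


lemma jacobi {n : ℕ} {M : ℝ → Matrix (Fin n) (Fin n) ℝ} {M' : Matrix (Fin n) (Fin n) ℝ} {t : ℝ}
    (h : ∀ i j, HasDerivAt (fun y => M y i j) (M' i j) t) :
    HasDerivAt (fun y => (M y).det) ((Matrix.adjugate (M t) * M').trace) t := by
  have H : ∀ σ : Equiv.Perm (Fin n),
      HasDerivAt (fun y => ∏ i, M y (σ i) i)
        (∑ j, (∏ i ∈ Finset.univ.erase j, M t (σ i) i) * M' (σ j) j) t := by
    intro σ
    have := HasDerivAt.fun_finsetProd (u := (Finset.univ : Finset (Fin n)))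
      (f := fun i y => M y (σ i) i) (f' := fun i => M' (σ i) i) (x := t)
      (fun i _ => h (σ i) i)
    simpa [smul_eq_mul] using this
  have H2 := HasDerivAt.fun_sum (u := (Finset.univ : Finset (Equiv.Perm (Fin n))))
    (fun σ _ => (H σ).const_mul ((Equiv.Perm.sign σ : ℤ) : ℝ))
  have hfun : (fun y => ∑ σ : Equiv.Perm (Fin n),
      ((Equiv.Perm.sign σ : ℤ) : ℝ) * ∏ i, M y (σ i) i) = fun y => (M y).det := by
    funext y
    rw [Matrix.det_apply']
  rw [hfun] at H2
  refine H2.congr_deriv ?_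
  -- value equality
  have step1 : ∀ j : Fin n, ((M t).updateCol j (fun p => M' p j)).det
      = ∑ σ : Equiv.Perm (Fin n),
        ((Equiv.Perm.sign σ : ℤ) : ℝ) * ((∏ i ∈ Finset.univ.erase j, M t (σ i) i) * M' (σ j) j) := by
    intro j
    rw [Matrix.det_apply']
    refine Finset.sum_congr rfl fun σ _ => ?_
    congr 1
    rw [← Finset.prod_erase_mul (a := j) (h := Finset.mem_univ j)]
    congr 1
    · exact Finset.prod_congr rfl fun i hi => by
        rw [Matrix.updateCol_apply]
        simp [Finset.mem_erase.1 hi |>.1]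
    · simp [Matrix.updateCol_apply]
  have step2 : (Matrix.adjugate (M t) * M').trace
      = ∑ j : Fin n, ((M t).updateCol j (fun p => M' p j)).det := by
    simp only [← Matrix.cramer_apply, Matrix.cramer_eq_adjugate_mulVec, Matrix.trace,
      Matrix.diag, Matrix.mul_apply, Matrix.mulVec, dotProduct]
  rw [step2]
  simp_rw [step1, Finset.mul_sum]
  exact Finset.sum_comm


/-- **s-component of Theorem 4 of the paper (finite dimension, D = 0).**
For commuting symmetric positive-semidefinite `n×n` real matrices `B`, `C` and `α : ℝ`,
with `ch(t) = ∑ t^{2m}(CB)ᵐ/(2m)!`, `sh(t) = ∑ t^{2m+1}(CB)ᵐ/(2m+1)!`, `ch(t)` positive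
definite for all `t`, `Q(t) = sh(t)·ch(t)⁻¹·B` and `s(t) = e^{αt}(det ch(t))^{−1/2}`,
one has `s(0) = 1` and `s'(t) = −½ tr(C·Q(t))·s(t) + α·s(t)`. -/
theorem mehler_solution_s_component
    {n : ℕ} (B C : Matrix (Fin n) (Fin n) ℝ)
    (hB : B.PosSemidef) (hC : C.PosSemidef) (hBC : B * C = C * B) (α : ℝ)
    (ch sh : ℝ → Matrix (Fin n) (Fin n) ℝ)
    (hch : ch = fun t : ℝ =>
      ∑' m : ℕ, (t ^ (2 * m) / (Nat.factorial (2 * m) : ℝ)) • (C * B) ^ m)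
    (hsh : sh = fun t : ℝ =>
      ∑' m : ℕ, (t ^ (2 * m + 1) / (Nat.factorial (2 * m + 1) : ℝ)) • (C * B) ^ m)
    (hchpos : ∀ t : ℝ, (ch t).PosDef)
    (Q : ℝ → Matrix (Fin n) (Fin n) ℝ)
    (hQ : Q = fun t : ℝ => sh t * (ch t)⁻¹ * B)
    (s : ℝ → ℝ)
    (hs : s = fun t : ℝ => Real.exp (α * t) * (ch t).det ^ (-(1:ℝ)/2)) :
    s 0 = 1 ∧
    ∀ t : ℝ, HasDerivAt s (-(1/2) * (C * Q t).trace * s t + α * s t) t := by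
  set A : Matrix (Fin n) (Fin n) ℝ := C * B with hA
  -- entrywise summability
  have hsum_ch_e : ∀ (y : ℝ) (i j : Fin n),
      Summable (fun m : ℕ => (y ^ (2*m) / ((2*m).factorial : ℝ)) * (A ^ m) i j) :=
    fun y i j => summable_entry A i j y (fun m => 2*m) (fun a b h => by dsimp at h; omega)
      (fun m => by omega)
  have hsum_sh_e : ∀ (y : ℝ) (i j : Fin n),
      Summable (fun m : ℕ => (y ^ (2*m+1) / ((2*m+1).factorial : ℝ)) * (A ^ m) i j) :=
    fun y i j => summable_entry A i j y (fun m => 2*m+1) (fun a b h => by dsimp at h; omega)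
      (fun m => by omega)
  have hsum_ch_M : ∀ y : ℝ,
      Summable (fun m : ℕ => (y ^ (2*m) / ((2*m).factorial : ℝ)) • A ^ m) := fun y =>
    Pi.summable.2 fun i => Pi.summable.2 fun j => by
      simpa [smul_eq_mul] using hsum_ch_e y i j
  have hsum_sh_M : ∀ y : ℝ,
      Summable (fun m : ℕ => (y ^ (2*m+1) / ((2*m+1).factorial : ℝ)) • A ^ m) := fun y =>
    Pi.summable.2 fun i => Pi.summable.2 fun j => by
      simpa [smul_eq_mul] using hsum_sh_e y i j
  -- entrywise formulas
  have hch_e : ∀ (y : ℝ) (i j : Fin n),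
      ch y i j = ∑' m : ℕ, (y ^ (2*m) / ((2*m).factorial : ℝ)) * (A ^ m) i j := by
    intro y i j
    rw [hch]
    rw [show ((fun t : ℝ => ∑' m : ℕ, (t ^ (2*m) / ((2*m).factorial : ℝ)) • A ^ m) y) i j
      = (∑' m : ℕ, (y ^ (2*m) / ((2*m).factorial : ℝ)) • A ^ m) i j from rfl]
    erw [tsum_apply (hsum_ch_M y),
      tsum_apply (Pi.summable.2 fun j => by simpa [smul_eq_mul] using hsum_ch_e y i j)]
    exact tsum_congr fun m => by simp [smul_eq_mul]
  have hsh_e : ∀ (y : ℝ) (i j : Fin n),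
      sh y i j = ∑' m : ℕ, (y ^ (2*m+1) / ((2*m+1).factorial : ℝ)) * (A ^ m) i j := by
    intro y i j
    rw [hsh]
    rw [show ((fun t : ℝ => ∑' m : ℕ, (t ^ (2*m+1) / ((2*m+1).factorial : ℝ)) • A ^ m) y) i j
      = (∑' m : ℕ, (y ^ (2*m+1) / ((2*m+1).factorial : ℝ)) • A ^ m) i j from rfl]
    erw [tsum_apply (hsum_sh_M y),
      tsum_apply (Pi.summable.2 fun j => by simpa [smul_eq_mul] using hsum_sh_e y i j)]
    exact tsum_congr fun m => by simp [smul_eq_mul]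
  -- entrywise derivative of ch
  have hch_deriv : ∀ (t : ℝ) (i j : Fin n),
      HasDerivAt (fun y => ch y i j) ((A * sh t) i j) t := by
    intro t i j
    have h1 : (fun y => ch y i j)
        = fun y => ∑' m : ℕ, (y ^ (2*m) / ((2*m).factorial : ℝ)) * (A ^ m) i j :=
      funext fun y => hch_e y i j
    have h3 : (A * sh t) i j
        = ∑' m : ℕ, (t ^ (2*m+1) / ((2*m+1).factorial : ℝ)) * (A ^ (m+1)) i j := by
      rw [Matrix.mul_apply]
      calc ∑ k, A i k * sh t k j
          = ∑ k, ∑' m : ℕ, A i k * ((t ^ (2*m+1) / ((2*m+1).factorial : ℝ)) * (A ^ m) k j) := by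
            refine Finset.sum_congr rfl fun k _ => ?_
            rw [hsh_e t k j, ← tsum_mul_left]
        _ = ∑' m : ℕ, ∑ k, A i k * ((t ^ (2*m+1) / ((2*m+1).factorial : ℝ)) * (A ^ m) k j) :=
            (Summable.tsum_finsetSum (fun k _ => (hsum_sh_e t k j).mul_left (A i k))).symm
        _ = ∑' m : ℕ, (t ^ (2*m+1) / ((2*m+1).factorial : ℝ)) * (A ^ (m+1)) i j := by
            refine tsum_congr fun m => ?_
            rw [pow_succ' A m, Matrix.mul_apply, Finset.mul_sum]
            exact Finset.sum_congr rfl fun k _ => by ring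
    rw [h1, h3]
    exact hasDerivAt_ch_entry A i j t
  -- derivative of det ∘ ch
  have hdet_deriv : ∀ t : ℝ, HasDerivAt (fun y => (ch y).det)
      ((ch t).det * ((ch t)⁻¹ * (A * sh t)).trace) t := by
    intro t
    have hdpos : 0 < (ch t).det := (hchpos t).det_pos
    have hadj : (ch t).det • (ch t)⁻¹ = (ch t).adjugate := by
      rw [Matrix.inv_def, Ring.inverse_eq_inv, smul_smul, mul_inv_cancel₀ hdpos.ne', one_smul]
    have := jacobi (fun i j => hch_deriv t i j)
    rwa [← hadj, Matrix.smul_mul, Matrix.trace_smul, smul_eq_mul] at this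
  constructor
  · -- s 0 = 1
    have hch0 : ch 0 = 1 := by
      rw [hch]
      show (∑' m : ℕ, ((0:ℝ) ^ (2*m) / ((2*m).factorial : ℝ)) • A ^ m) = 1
      rw [tsum_eq_single 0 (fun m hm => by
        rw [zero_pow (by omega : 2*m ≠ 0), zero_div, zero_smul])]
      norm_num
    rw [hs]
    show Real.exp (α * 0) * (ch 0).det ^ (-(1:ℝ)/2) = 1
    rw [hch0, Matrix.det_one, Real.one_rpow, mul_zero, Real.exp_zero, mul_one]
  · intro t
    have hdpos : 0 < (ch t).det := (hchpos t).det_pos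
    have htr : (C * Q t).trace = ((ch t)⁻¹ * (A * sh t)).trace := by
      rw [hQ]
      show (C * (sh t * (ch t)⁻¹ * B)).trace = _
      have e1 : C * (sh t * (ch t)⁻¹ * B) = (C * sh t * (ch t)⁻¹) * B := by
        simp only [mul_assoc]
      rw [e1, Matrix.trace_mul_comm]
      have e2 : B * (C * sh t * (ch t)⁻¹) = (A * sh t) * (ch t)⁻¹ := by
        rw [hA]
        simp only [← mul_assoc]
        rw [hBC]
      rw [e2, Matrix.trace_mul_comm]
    have hexp : HasDerivAt (fun y => Real.exp (α * y)) (Real.exp (α * t) * (α * 1)) t :=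
      ((hasDerivAt_id t).const_mul α).exp
    have hpow : HasDerivAt (fun y => (ch y).det ^ (-(1:ℝ)/2))
        ((ch t).det * ((ch t)⁻¹ * (A * sh t)).trace * (-(1:ℝ)/2)
          * (ch t).det ^ ((-(1:ℝ)/2) - 1)) t :=
      (hdet_deriv t).rpow_const (Or.inl hdpos.ne')
    have hmul := hexp.mul hpow
    rw [hs, htr]
    show HasDerivAt (fun y => Real.exp (α * y) * (ch y).det ^ (-(1:ℝ)/2))
      (-(1/2) * ((ch t)⁻¹ * (A * sh t)).trace
          * (Real.exp (α * t) * (ch t).det ^ (-(1:ℝ)/2))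
        + α * (Real.exp (α * t) * (ch t).det ^ (-(1:ℝ)/2))) t
    refine hmul.congr_deriv ?_
    rw [Real.rpow_sub_one hdpos.ne']
    field_simp
    ring
end

section
/- Let B and C be commuting symmetric positive-semidefinite n×n real matrices. For t ∈ ℝ set ch(t) = ∑_{m=0}^∞ t^{2m}(CB)ᵐ/(2m)! and sh(t) = ∑_{m=0}^∞ t^{2m+1}(CB)ᵐ/(2m+1)!. Then for every t ∈ ℝ the matrix ch(t) is symmetric positive definite and det ch(t) ≥ 1; moreover, if B is positive definite, then for every t > 0 the matrix Q(t) = sh(t)·ch(t)⁻¹·B is symmetric positive definite. -/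
open Matrix

namespace MehlerAux

variable {n : ℕ}

lemma conj_mul_conj (U W1 W2 : Matrix (Fin n) (Fin n) ℝ) (hU : star U * U = 1) :
    (U * W1 * star U) * (U * W2 * star U) = U * (W1 * W2) * star U := by
  have h : ∀ X : Matrix (Fin n) (Fin n) ℝ, star U * (U * X) = X := fun X => by
    rw [← mul_assoc, hU, one_mul]
  simp only [mul_assoc, h]

lemma conj_pow (U D : Matrix (Fin n) (Fin n) ℝ) (hU : star U * U = 1)
    (hU' : U * star U = 1) (m : ℕ) :
    (U * D * star U) ^ m = U * D ^ m * star U := by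
  induction m with
  | zero => simp [hU']
  | succ m ih => rw [pow_succ, ih, conj_mul_conj U _ _ hU, pow_succ]

noncomputable def _root_.Matrix.PosSemidef.sqrt {A : Matrix (Fin n) (Fin n) ℝ}
    (hA : A.PosSemidef) : Matrix (Fin n) (Fin n) ℝ :=
  (hA.1.eigenvectorUnitary : Matrix (Fin n) (Fin n) ℝ) *
    Matrix.diagonal (fun i => Real.sqrt (hA.1.eigenvalues i)) *
    star (hA.1.eigenvectorUnitary : Matrix (Fin n) (Fin n) ℝ)

lemma _root_.Matrix.PosSemidef.posSemidef_sqrt {A : Matrix (Fin n) (Fin n) ℝ}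
    (hA : A.PosSemidef) : hA.sqrt.PosSemidef := by
  have := (Matrix.PosSemidef.diagonal (d := fun i => Real.sqrt (hA.1.eigenvalues i))
    (fun i => Real.sqrt_nonneg _)).mul_mul_conjTranspose_same
    (hA.1.eigenvectorUnitary : Matrix (Fin n) (Fin n) ℝ)
  simpa [Matrix.PosSemidef.sqrt, Matrix.star_eq_conjTranspose] using this

lemma _root_.Matrix.PosSemidef.sqrt_mul_self {A : Matrix (Fin n) (Fin n) ℝ}
    (hA : A.PosSemidef) : hA.sqrt * hA.sqrt = A := by
  have hU : star (hA.1.eigenvectorUnitary : Matrix (Fin n) (Fin n) ℝ) *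
      (hA.1.eigenvectorUnitary : Matrix (Fin n) (Fin n) ℝ) = 1 :=
    Matrix.mem_unitaryGroup_iff'.mp hA.1.eigenvectorUnitary.2
  have hspec := hA.1.spectral_theorem
  rw [RCLike.ofReal_real_eq_id, Function.id_comp] at hspec
  unfold Matrix.PosSemidef.sqrt
  rw [conj_mul_conj _ _ _ hU, Matrix.diagonal_mul_diagonal]
  have hd : (fun i => Real.sqrt (hA.1.eigenvalues i) * Real.sqrt (hA.1.eigenvalues i))
      = hA.1.eigenvalues := funext fun i => Real.mul_self_sqrt (hA.eigenvalues_nonneg i)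
  rw [hd]
  exact hspec.symm

lemma posDef_conj' {W M : Matrix (Fin n) (Fin n) ℝ} (hM : M.PosDef) (hW : IsUnit W) :
    (Wᴴ * M * W).PosDef := by
  exact hM.conjTranspose_mul_mul_same (Matrix.mulVec_injective_iff_isUnit.mpr hW)

lemma posDef_conj {W M : Matrix (Fin n) (Fin n) ℝ} (hM : M.PosDef) (hW : IsUnit W) :
    (W * M * star W).PosDef := by
  have := posDef_conj' hM (M := M) (W := Wᴴ) ((Matrix.isUnit_conjTranspose W).mpr hW)
  simpa [Matrix.star_eq_conjTranspose] using this

lemma hasSum_conj (U V : Matrix (Fin n) (Fin n) ℝ) {f : ℕ → Matrix (Fin n) (Fin n) ℝ}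
    {S : Matrix (Fin n) (Fin n) ℝ} (h : HasSum f S) :
    HasSum (fun m => U * f m * V) (U * S * V) := by
  have h1 := h.map (AddMonoidHom.mulLeft U) (continuous_const.matrix_mul continuous_id)
  have h2 := h1.map (AddMonoidHom.mulRight V) (continuous_id.matrix_mul continuous_const)
  simpa [Function.comp_def] using h2

lemma hasSum_diagonal {v : ℕ → Fin n → ℝ} {g : Fin n → ℝ}
    (h : ∀ i, HasSum (fun m => v m i) (g i)) :
    HasSum (fun m => Matrix.diagonal (v m)) (Matrix.diagonal g) := by
  have hp : HasSum v g := Pi.hasSum.mpr h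
  have := hp.map (Matrix.diagonalAddMonoidHom (Fin n) ℝ) (continuous_id.matrix_diagonal)
  simpa [Function.comp_def, Matrix.diagonalAddMonoidHom] using this

lemma hasSum_matrix_series {A : Matrix (Fin n) (Fin n) ℝ} (hA : A.IsHermitian)
    (c : ℕ → ℝ) (g : Fin n → ℝ)
    (hg : ∀ i, HasSum (fun m => c m * hA.eigenvalues i ^ m) (g i)) :
    HasSum (fun m => c m • A ^ m)
      ((hA.eigenvectorUnitary : Matrix (Fin n) (Fin n) ℝ) * Matrix.diagonal g *
        star (hA.eigenvectorUnitary : Matrix (Fin n) (Fin n) ℝ)) := by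
  set U : Matrix (Fin n) (Fin n) ℝ := (hA.eigenvectorUnitary : Matrix (Fin n) (Fin n) ℝ) with hUdef
  have hU : star U * U = 1 := Matrix.mem_unitaryGroup_iff'.mp hA.eigenvectorUnitary.2
  have hU' : U * star U = 1 := Matrix.mem_unitaryGroup_iff.mp hA.eigenvectorUnitary.2
  have hspec : A = U * Matrix.diagonal hA.eigenvalues * star U := by
    have h := hA.spectral_theorem
    rwa [RCLike.ofReal_real_eq_id, Function.id_comp] at h
  have hpow : ∀ m, A ^ m = U * Matrix.diagonal (fun i => hA.eigenvalues i ^ m) * star U := by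
    intro m
    conv_lhs => rw [hspec]
    rw [conj_pow U _ hU hU', Matrix.diagonal_pow]
    rfl
  have hfun : (fun m => c m • A ^ m)
      = fun m => U * Matrix.diagonal (fun i => c m * hA.eigenvalues i ^ m) * star U := by
    funext m
    rw [hpow m]
    have : Matrix.diagonal (fun i => c m * hA.eigenvalues i ^ m)
        = c m • Matrix.diagonal (fun i => hA.eigenvalues i ^ m) := by
      rw [← Matrix.diagonal_smul]
      congr 1
    rw [this, Matrix.mul_smul, Matrix.smul_mul]
  rw [hfun]
  exact hasSum_conj U (star U) (hasSum_diagonal hg)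

lemma even_term_nonneg (t x : ℝ) (hx : 0 ≤ x) (m : ℕ) :
    0 ≤ t ^ (2 * m) / (Nat.factorial (2 * m) : ℝ) * x ^ m := by
  rw [pow_mul]
  positivity

lemma summable_even (t x : ℝ) (hx : 0 ≤ x) :
    Summable fun m : ℕ => t ^ (2 * m) / (Nat.factorial (2 * m) : ℝ) * x ^ m := by
  have key : ∀ m : ℕ, t ^ (2 * m) / (Nat.factorial (2 * m) : ℝ) * x ^ m
      = (t ^ 2 * x) ^ m / (Nat.factorial (2 * m) : ℝ) := by
    intro m; rw [mul_pow, pow_mul]; ring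
  simp only [key]
  refine Summable.of_nonneg_of_le (fun m => by positivity) (fun m => ?_)
    (Real.summable_pow_div_factorial (t ^ 2 * x))
  gcongr
  omega

lemma one_le_tsum_even (t x : ℝ) (hx : 0 ≤ x) :
    1 ≤ ∑' m : ℕ, t ^ (2 * m) / (Nat.factorial (2 * m) : ℝ) * x ^ m := by
  have hs := summable_even t x hx
  have h0 := Summable.le_tsum hs 0 (fun j _ => even_term_nonneg t x hx j)
  simpa using h0

lemma odd_term_nonneg (t x : ℝ) (ht : 0 ≤ t) (hx : 0 ≤ x) (m : ℕ) :
    0 ≤ t ^ (2 * m + 1) / (Nat.factorial (2 * m + 1) : ℝ) * x ^ m := by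
  have h1 : 0 ≤ t ^ (2 * m + 1) := pow_nonneg ht _
  positivity

lemma summable_odd (t x : ℝ) (hx : 0 ≤ x) :
    Summable fun m : ℕ => t ^ (2 * m + 1) / (Nat.factorial (2 * m + 1) : ℝ) * x ^ m := by
  have key : ∀ m : ℕ, t ^ (2 * m + 1) / (Nat.factorial (2 * m + 1) : ℝ) * x ^ m
      = t * ((t ^ 2 * x) ^ m / (Nat.factorial (2 * m + 1) : ℝ)) := by
    intro m; rw [pow_succ, mul_pow, pow_mul]; ring
  simp only [key]
  refine Summable.mul_left t ?_
  refine Summable.of_nonneg_of_le (fun m => by positivity) (fun m => ?_)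
    (Real.summable_pow_div_factorial (t ^ 2 * x))
  gcongr
  omega

lemma le_tsum_odd (t x : ℝ) (ht : 0 ≤ t) (hx : 0 ≤ x) :
    t ≤ ∑' m : ℕ, t ^ (2 * m + 1) / (Nat.factorial (2 * m + 1) : ℝ) * x ^ m := by
  have hs := summable_odd t x hx
  have h0 := Summable.le_tsum hs 0 (fun j _ => odd_term_nonneg t x ht hx j)
  simpa using h0

lemma commute_sqrt {Bm S : Matrix (Fin n) (Fin n) ℝ} (hB : Bm.PosSemidef)
    (h : S * Bm = Bm * S) : S * hB.sqrt = hB.sqrt * S := by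
  set V : Matrix (Fin n) (Fin n) ℝ := (hB.1.eigenvectorUnitary : Matrix (Fin n) (Fin n) ℝ)
    with hVdef
  have hV : star V * V = 1 := Matrix.mem_unitaryGroup_iff'.mp hB.1.eigenvectorUnitary.2
  have hV' : V * star V = 1 := Matrix.mem_unitaryGroup_iff.mp hB.1.eigenvectorUnitary.2
  have cancel1 : ∀ X : Matrix (Fin n) (Fin n) ℝ, star V * (V * X) = X := fun X => by
    rw [← mul_assoc, hV, one_mul]
  have cancel2 : ∀ X : Matrix (Fin n) (Fin n) ℝ, V * (star V * X) = X := fun X => by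
    rw [← mul_assoc, hV', one_mul]
  set β : Fin n → ℝ := hB.1.eigenvalues with hβdef
  have hspec : Bm = V * Matrix.diagonal β * star V := by
    have h := hB.1.spectral_theorem
    rwa [RCLike.ofReal_real_eq_id, Function.id_comp] at h
  set S' : Matrix (Fin n) (Fin n) ℝ := star V * S * V with hS'def
  have hSVS : S = V * S' * star V := by
    rw [hS'def]
    simp only [mul_assoc, cancel2]
    rw [hV', mul_one]
  have hS' : S' * Matrix.diagonal β = Matrix.diagonal β * S' := by
    have hdiag : Matrix.diagonal β = star V * Bm * V := by
      rw [hspec]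
      simp only [mul_assoc, cancel1, cancel2]
      rw [hV, mul_one]
    rw [hdiag, hS'def]
    calc star V * S * V * (star V * Bm * V)
        = star V * (S * (V * (star V * (Bm * V)))) := by simp only [mul_assoc]
      _ = star V * (S * (Bm * V)) := by rw [cancel2]
      _ = star V * (Bm * (S * V)) := by
          rw [← mul_assoc S, h, mul_assoc]
      _ = star V * (Bm * (V * (star V * (S * V)))) := by rw [cancel2]
      _ = star V * Bm * V * (star V * S * V) := by simp only [mul_assoc]
  have key : ∀ i j, S' i j * Real.sqrt (β j) = Real.sqrt (β i) * S' i j := by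
    intro i j
    have h2 : S' i j * β j = β i * S' i j := by
      have := congrFun (congrFun hS' i) j
      simpa [Matrix.mul_diagonal, Matrix.diagonal_mul] using this
    by_cases hz : S' i j = 0
    · simp [hz]
    · have hββ : β j = β i := by
        have h3 : S' i j * β j = S' i j * β i := by rw [h2]; ring
        exact mul_left_cancel₀ hz h3
      rw [hββ]; ring
  have hE : S' * Matrix.diagonal (fun i => Real.sqrt (β i))
      = Matrix.diagonal (fun i => Real.sqrt (β i)) * S' := by
    ext i j
    simp only [Matrix.mul_diagonal, Matrix.diagonal_mul]
    exact key i j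
  have hsqrt : hB.sqrt = V * Matrix.diagonal (fun i => Real.sqrt (β i)) * star V := rfl
  rw [hsqrt, hSVS, conj_mul_conj V S' _ hV, conj_mul_conj V _ S' hV, hE]

end MehlerAux

open MehlerAux in
/-- **Positivity of the Mehler coefficients (Theorem 4 and Remark 2 of the paper).**
For commuting symmetric positive-semidefinite `n×n` real matrices `B`, `C`, with
`ch(t) = ∑ t^{2m}(CB)ᵐ/(2m)!` and `sh(t) = ∑ t^{2m+1}(CB)ᵐ/(2m+1)!`, the matrix `ch(t)`
is symmetric positive definite with `det ch(t) ≥ 1` for every `t`; moreover, if `B` is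
positive definite, then `Q(t) = sh(t)·ch(t)⁻¹·B` is symmetric positive definite for
every `t > 0`. -/
theorem mehler_coefficients_positivity
    {n : ℕ} (B C : Matrix (Fin n) (Fin n) ℝ)
    (hB : B.PosSemidef) (hC : C.PosSemidef) (hBC : B * C = C * B)
    (ch sh : ℝ → Matrix (Fin n) (Fin n) ℝ)
    (hch : ch = fun t : ℝ =>
      ∑' m : ℕ, (t ^ (2 * m) / (Nat.factorial (2 * m) : ℝ)) • (C * B) ^ m)
    (hsh : sh = fun t : ℝ =>
      ∑' m : ℕ, (t ^ (2 * m + 1) / (Nat.factorial (2 * m + 1) : ℝ)) • (C * B) ^ m)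
    (Q : ℝ → Matrix (Fin n) (Fin n) ℝ)
    (hQ : Q = fun t : ℝ => sh t * (ch t)⁻¹ * B) :
    (∀ t : ℝ, (ch t).PosDef ∧ 1 ≤ (ch t).det) ∧
    (B.PosDef → ∀ t : ℝ, 0 < t → (Q t).PosDef) := by
  classical
  -- `C * B` is symmetric positive semidefinite
  have hBsqC : B * hC.sqrt = hC.sqrt * B := commute_sqrt hC hBC
  have hApsd : (C * B).PosSemidef := by
    have h1 : C * B = hC.sqrt * B * (hC.sqrt)ᴴ := by
      rw [hC.posSemidef_sqrt.1.eq]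
      calc C * B = hC.sqrt * hC.sqrt * B := by rw [hC.sqrt_mul_self]
        _ = hC.sqrt * (hC.sqrt * B) := by rw [mul_assoc]
        _ = hC.sqrt * (B * hC.sqrt) := by rw [← hBsqC]
        _ = hC.sqrt * B * hC.sqrt := by rw [mul_assoc]
    rw [h1]
    exact hB.mul_mul_conjTranspose_same hC.sqrt
  set hAh : (C * B).IsHermitian := hApsd.1 with hAhdef
  set lam : Fin n → ℝ := hAh.eigenvalues with hlamdef
  have hlam : ∀ i, 0 ≤ lam i := fun i => hApsd.eigenvalues_nonneg i
  set U : Matrix (Fin n) (Fin n) ℝ := (hAh.eigenvectorUnitary : Matrix (Fin n) (Fin n) ℝ)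
    with hUdef
  have hU : star U * U = 1 := Matrix.mem_unitaryGroup_iff'.mp hAh.eigenvectorUnitary.2
  have hU' : U * star U = 1 := Matrix.mem_unitaryGroup_iff.mp hAh.eigenvectorUnitary.2
  have hUunit : IsUnit U := ⟨⟨U, star U, hU', hU⟩, rfl⟩
  -- the `ch` analysis, done for every `t`
  have chkey : ∀ t : ℝ, ∃ g : Fin n → ℝ,
      (∀ i, 1 ≤ g i) ∧ ch t = U * Matrix.diagonal g * star U := by
    intro t
    refine ⟨fun i => ∑' m : ℕ, t ^ (2 * m) / (Nat.factorial (2 * m) : ℝ) * lam i ^ m,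
      fun i => one_le_tsum_even t (lam i) (hlam i), ?_⟩
    have hgsum : ∀ i, HasSum
        (fun m => (t ^ (2 * m) / (Nat.factorial (2 * m) : ℝ)) * lam i ^ m)
        (∑' m : ℕ, t ^ (2 * m) / (Nat.factorial (2 * m) : ℝ) * lam i ^ m) :=
      fun i => (summable_even t (lam i) (hlam i)).hasSum
    have hmain := hasSum_matrix_series hAh
      (fun m => t ^ (2 * m) / (Nat.factorial (2 * m) : ℝ)) _ hgsum
    rw [hch]
    exact hmain.tsum_eq
  have chpos : ∀ t : ℝ, (ch t).PosDef ∧ 1 ≤ (ch t).det := by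
    intro t
    obtain ⟨g, hg1, hcht⟩ := chkey t
    have hgpos : ∀ i, 0 < g i := fun i => lt_of_lt_of_le one_pos (hg1 i)
    constructor
    · rw [hcht]
      exact posDef_conj (Matrix.PosDef.diagonal hgpos) hUunit
    · rw [hcht]
      have hdet1 : U.det * (star U).det = 1 := by
        rw [← Matrix.det_mul, hU', Matrix.det_one]
      rw [Matrix.det_mul, Matrix.det_mul, Matrix.det_diagonal]
      have hprod : 1 ≤ ∏ i, g i := by
        calc (1 : ℝ) = ∏ _i : Fin n, 1 := by simp
          _ ≤ ∏ i, g i := Finset.prod_le_prod (fun _ _ => zero_le_one) (fun i _ => hg1 i)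
      have h5 : U.det * (∏ i, g i) * (star U).det = ∏ i, g i := by
        linear_combination (∏ i, g i) * hdet1
      rw [h5]
      exact hprod
  refine ⟨chpos, ?_⟩
  intro hBpd t ht
  obtain ⟨g, hg1, hcht⟩ := chkey t
  have hgpos : ∀ i, 0 < g i := fun i => lt_of_lt_of_le one_pos (hg1 i)
  -- the `sh` analysis
  set hf : Fin n → ℝ :=
    fun i => ∑' m : ℕ, t ^ (2 * m + 1) / (Nat.factorial (2 * m + 1) : ℝ) * lam i ^ m with hfdef
  have hfpos : ∀ i, 0 < hf i := fun i =>
    lt_of_lt_of_le ht (le_tsum_odd t (lam i) ht.le (hlam i))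
  have hsht : sh t = U * Matrix.diagonal hf * star U := by
    have hhsum : ∀ i, HasSum
        (fun m => (t ^ (2 * m + 1) / (Nat.factorial (2 * m + 1) : ℝ)) * lam i ^ m) (hf i) :=
      fun i => (summable_odd t (lam i) (hlam i)).hasSum
    have hmain := hasSum_matrix_series hAh
      (fun m => t ^ (2 * m + 1) / (Nat.factorial (2 * m + 1) : ℝ)) _ hhsum
    rw [hsh]
    exact hmain.tsum_eq
  -- the inverse of `ch t`
  have hchpd : (ch t).PosDef := (chpos t).1
  have hdet : IsUnit (ch t).det := hchpd.det_pos.ne'.isUnit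
  have hchinv : (ch t)⁻¹ = U * Matrix.diagonal (fun i => (g i)⁻¹) * star U := by
    apply Matrix.inv_eq_right_inv
    rw [hcht, conj_mul_conj U _ _ hU, Matrix.diagonal_mul_diagonal]
    have hone : (fun i => g i * (g i)⁻¹) = fun _ => (1 : ℝ) :=
      funext fun i => mul_inv_cancel₀ (hgpos i).ne'
    rw [hone, Matrix.diagonal_one, mul_one, hU']
  have hS_eq : sh t * (ch t)⁻¹ = U * Matrix.diagonal (fun i => hf i * (g i)⁻¹) * star U := by
    rw [hsht, hchinv, conj_mul_conj U _ _ hU, Matrix.diagonal_mul_diagonal]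
  have hSpd : (sh t * (ch t)⁻¹).PosDef := by
    rw [hS_eq]
    exact posDef_conj
      (Matrix.PosDef.diagonal fun i => mul_pos (hfpos i) (inv_pos.2 (hgpos i))) hUunit
  -- commutation of `B` with the series
  have hcA : Commute B (C * B) := by
    show B * (C * B) = (C * B) * B
    rw [← mul_assoc, hBC]
  have hcomm_tsum : ∀ (c : ℕ → ℝ) (X : Matrix (Fin n) (Fin n) ℝ),
      HasSum (fun m => c m • (C * B) ^ m) X → B * X = X * B := by
    intro c X hX
    have h1 := hX.map (AddMonoidHom.mulLeft B) (continuous_const.matrix_mul continuous_id)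
    have h2 := hX.map (AddMonoidHom.mulRight B) (continuous_id.matrix_mul continuous_const)
    have hfe : (fun m => B * (c m • (C * B) ^ m)) = fun m => (c m • (C * B) ^ m) * B := by
      funext m
      rw [mul_smul_comm, smul_mul_assoc, (hcA.pow_right m).eq]
    have h1' : HasSum (fun m => B * (c m • (C * B) ^ m)) (B * X) := by
      simpa [Function.comp_def] using h1
    have h2' : HasSum (fun m => (c m • (C * B) ^ m) * B) (X * B) := by
      simpa [Function.comp_def] using h2
    rw [hfe] at h1'
    exact h1'.unique h2'
  have hXch : HasSum (fun m => (t ^ (2 * m) / (Nat.factorial (2 * m) : ℝ)) • (C * B) ^ m)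
      (ch t) := by
    rw [hch]
    exact (hasSum_matrix_series hAh (fun m => t ^ (2 * m) / (Nat.factorial (2 * m) : ℝ)) _
      (fun i => (summable_even t (lam i) (hlam i)).hasSum)).summable.hasSum
  have hXsh : HasSum
      (fun m => (t ^ (2 * m + 1) / (Nat.factorial (2 * m + 1) : ℝ)) • (C * B) ^ m) (sh t) := by
    rw [hsh]
    exact (hasSum_matrix_series hAh
      (fun m => t ^ (2 * m + 1) / (Nat.factorial (2 * m + 1) : ℝ)) _
      (fun i => (summable_odd t (lam i) (hlam i)).hasSum)).summable.hasSum
  have hBch : B * ch t = ch t * B := hcomm_tsum _ _ hXch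
  have hBsh : B * sh t = sh t * B := hcomm_tsum _ _ hXsh
  have hBchinv : B * (ch t)⁻¹ = (ch t)⁻¹ * B := by
    calc B * (ch t)⁻¹ = (ch t)⁻¹ * (ch t * B) * (ch t)⁻¹ := by
          rw [← mul_assoc, Matrix.nonsing_inv_mul _ hdet, one_mul]
      _ = (ch t)⁻¹ * (B * ch t) * (ch t)⁻¹ := by rw [hBch]
      _ = (ch t)⁻¹ * B := by
          rw [mul_assoc, mul_assoc, Matrix.mul_nonsing_inv _ hdet, mul_one]
  have hSB : (sh t * (ch t)⁻¹) * B = B * (sh t * (ch t)⁻¹) := by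
    rw [mul_assoc, ← hBchinv, ← mul_assoc, ← hBsh, mul_assoc]
  -- square root of `B`
  set D : Matrix (Fin n) (Fin n) ℝ := hBpd.posSemidef.sqrt with hDdef
  have hDD : D * D = B := hBpd.posSemidef.sqrt_mul_self
  have hDh : Dᴴ = D := hBpd.posSemidef.posSemidef_sqrt.1.eq
  have hSD : (sh t * (ch t)⁻¹) * D = D * (sh t * (ch t)⁻¹) :=
    commute_sqrt hBpd.posSemidef hSB
  have hDdetne : D.det ≠ 0 := by
    intro h0
    have hdetD : D.det * D.det = B.det := by rw [← Matrix.det_mul, hDD]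
    rw [h0, mul_zero] at hdetD
    exact hBpd.det_pos.ne' hdetD.symm
  have hDunit : IsUnit D := (Matrix.isUnit_iff_isUnit_det D).mpr hDdetne.isUnit
  have hQeq : sh t * (ch t)⁻¹ * B = D * (sh t * (ch t)⁻¹) * star D := by
    calc sh t * (ch t)⁻¹ * B = (sh t * (ch t)⁻¹) * (D * D) := by rw [hDD]
      _ = ((sh t * (ch t)⁻¹) * D) * D := by rw [← mul_assoc]
      _ = (D * (sh t * (ch t)⁻¹)) * D := by rw [hSD]
      _ = D * (sh t * (ch t)⁻¹) * star D := by
          rw [Matrix.star_eq_conjTranspose, hDh]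
  rw [hQ]
  show (sh t * (ch t)⁻¹ * B).PosDef
  rw [hQeq]
  exact posDef_conj hSpd hDunit
end

section
/- Let B be a symmetric positive-definite n×n real matrix, D an arbitrary n×n real matrix, α ∈ ℝ and x ∈ ℝⁿ. For t > 0 set Q(t) = ∫₀ᵗ e^{rDᵀ}·B·e^{rD} dr (which is symmetric positive definite for t > 0) and R(t) = e^{tDᵀ}, and define u(t,y) = e^{αt}·(2π)^{−n/2}·(det Q(t))^{−1/2}·exp(−½⟨Q(t)⁻¹(y − R(t)x), y − R(t)x⟩) for y ∈ ℝⁿ. Then for every t > 0 and y ∈ ℝⁿ, ∂u/∂t (t,y) = ½·tr(B·Hess_y u(t,y)) − (⟨∇_y u(t,y), Dᵀ y⟩ + tr(D)·u(t,y)) + α·u(t,y), where ∇_y u and Hess_y u denote the gradient and Hessian of u in y. -/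
open Matrix

section ExpAux
attribute [local instance] Matrix.linftyOpNormedRing Matrix.linftyOpNormedAlgebra

variable {n : ℕ}

lemma expEntry_hasDerivAt' (M : Matrix (Fin n) (Fin n) ℝ) (t : ℝ) (i j : Fin n) :
    HasDerivAt (fun τ : ℝ => NormedSpace.exp (τ • M) i j)
      ((M * NormedSpace.exp (t • M)) i j) t := by
  have h := hasDerivAt_exp_smul_const' (𝕂 := ℝ) M t
  have := ((Matrix.entryLinearMap ℝ ℝ i j).toContinuousLinearMap).hasFDerivAt.comp_hasDerivAt t h
  exact this

lemma expEntry_hasDerivAt (M : Matrix (Fin n) (Fin n) ℝ) (t : ℝ) (i j : Fin n) :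
    HasDerivAt (fun τ : ℝ => NormedSpace.exp (τ • M) i j)
      ((NormedSpace.exp (t • M) * M) i j) t := by
  have h := hasDerivAt_exp_smul_const (𝕂 := ℝ) M t
  have := ((Matrix.entryLinearMap ℝ ℝ i j).toContinuousLinearMap).hasFDerivAt.comp_hasDerivAt t h
  exact this

end ExpAux

attribute [local instance] Matrix.normedAddCommGroup Matrix.normedSpace

section Aux
variable {n : ℕ}


lemma jacobi_det {M : ℝ → Matrix (Fin n) (Fin n) ℝ} (M' : Matrix (Fin n) (Fin n) ℝ) {t : ℝ}
    (h : ∀ i j, HasDerivAt (fun τ => M τ i j) (M' i j) t) :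
    HasDerivAt (fun τ => (M τ).det) (((M t).adjugate * M').trace) t := by
  have hprod : ∀ σ : Equiv.Perm (Fin n), HasDerivAt (fun τ => ∏ i, M τ (σ i) i)
      (∑ i, (∏ j ∈ Finset.univ.erase i, M t (σ j) j) * M' (σ i) i) t := by
    intro σ
    simpa [smul_eq_mul] using
      HasDerivAt.fun_finsetProd (u := Finset.univ) (f := fun i τ => M τ (σ i) i)
        (f' := fun i => M' (σ i) i) (fun i _ => h (σ i) i)
  have hsum : HasDerivAt
      (fun τ => ∑ σ : Equiv.Perm (Fin n), ((Equiv.Perm.sign σ : ℤ) : ℝ) * ∏ i, M τ (σ i) i)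
      (∑ σ : Equiv.Perm (Fin n), ((Equiv.Perm.sign σ : ℤ) : ℝ) *
        ∑ i, (∏ j ∈ Finset.univ.erase i, M t (σ j) j) * M' (σ i) i) t :=
    HasDerivAt.fun_sum (fun σ _ => (hprod σ).const_mul _)
  have hfun : (fun τ => (M τ).det)
      = fun τ => ∑ σ : Equiv.Perm (Fin n), ((Equiv.Perm.sign σ : ℤ) : ℝ) * ∏ i, M τ (σ i) i :=
    funext fun τ => det_apply' _
  have val : ∀ i : Fin n,
      (∑ σ : Equiv.Perm (Fin n), ((Equiv.Perm.sign σ : ℤ) : ℝ) *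
        ((∏ j ∈ Finset.univ.erase i, M t (σ j) j) * M' (σ i) i))
      = ((M t).updateCol i fun k => M' k i).det := by
    intro i
    rw [det_apply']
    refine Finset.sum_congr rfl fun σ _ => ?_
    have h2 : (∏ j, ((M t).updateCol i fun k => M' k i) (σ j) j)
        = M' (σ i) i * ∏ j ∈ Finset.univ.erase i, M t (σ j) j := by
      rw [← Finset.mul_prod_erase Finset.univ _ (Finset.mem_univ i)]
      rw [Matrix.updateCol_apply, if_pos rfl]
      congr 1
      refine Finset.prod_congr rfl fun j hj => ?_
      rw [Matrix.updateCol_apply, if_neg (Finset.mem_erase.mp hj).1]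
    rw [h2]; ring
  have hswap : (∑ σ : Equiv.Perm (Fin n), ((Equiv.Perm.sign σ : ℤ) : ℝ) *
        ∑ i, (∏ j ∈ Finset.univ.erase i, M t (σ j) j) * M' (σ i) i)
      = ((M t).adjugate * M').trace := by
    simp_rw [Finset.mul_sum]
    rw [Finset.sum_comm]
    have h3 : ∀ i : Fin n, ((M t).updateCol i fun k => M' k i).det
        = ((M t).adjugate *ᵥ fun k => M' k i) i := fun i => by
      rw [← cramer_eq_adjugate_mulVec, cramer_apply]
    calc (∑ i : Fin n, ∑ σ : Equiv.Perm (Fin n), ((Equiv.Perm.sign σ : ℤ) : ℝ) *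
          ((∏ j ∈ Finset.univ.erase i, M t (σ j) j) * M' (σ i) i))
        = ∑ i : Fin n, ((M t).updateCol i fun k => M' k i).det := by
          exact Finset.sum_congr rfl fun i _ => val i
      _ = ((M t).adjugate * M').trace := by
          simp_rw [h3]
          simp [Matrix.trace, Matrix.diag, Matrix.mul_apply, Matrix.mulVec, dotProduct]
  rw [hfun]
  rw [← hswap]
  exact hsum

lemma det_differentiableAt {M : ℝ → Matrix (Fin n) (Fin n) ℝ} {t : ℝ}
    (h : ∀ i j, DifferentiableAt ℝ (fun τ => M τ i j) t) :
    DifferentiableAt ℝ (fun τ => (M τ).det) t := by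
  exact (jacobi_det (Matrix.of fun i j => deriv (fun τ => M τ i j) t)
    (fun i j => by simpa using (h i j).hasDerivAt)).differentiableAt

lemma adjugate_differentiableAt {M : ℝ → Matrix (Fin n) (Fin n) ℝ} {t : ℝ}
    (h : ∀ i j, DifferentiableAt ℝ (fun τ => M τ i j) t) (i j : Fin n) :
    DifferentiableAt ℝ (fun τ => (M τ).adjugate i j) t := by
  have hrep : (fun τ => (M τ).adjugate i j)
      = fun τ => ((M τ).updateRow j (Pi.single i 1)).det :=
    funext fun τ => Matrix.adjugate_apply _ i j
  rw [hrep]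
  refine det_differentiableAt fun a b => ?_
  by_cases hab : a = j
  · have hc : (fun τ => (M τ).updateRow j (Pi.single i 1) a b)
        = fun _ : ℝ => (Pi.single i (1:ℝ) : Fin n → ℝ) b :=
      funext fun τ => by rw [Matrix.updateRow_apply, if_pos hab]
    rw [hc]; exact differentiableAt_const _
  · have hc : (fun τ => (M τ).updateRow j (Pi.single i 1) a b) = fun τ => M τ a b :=
      funext fun τ => by rw [Matrix.updateRow_apply, if_neg hab]
    rw [hc]; exact h a b

lemma inv_entry_differentiableAt {M : ℝ → Matrix (Fin n) (Fin n) ℝ} {t : ℝ}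
    (h : ∀ i j, DifferentiableAt ℝ (fun τ => M τ i j) t) (hdet : (M t).det ≠ 0) (i j : Fin n) :
    DifferentiableAt ℝ (fun τ => (M τ)⁻¹ i j) t := by
  have hrep : (fun τ => (M τ)⁻¹ i j)
      = fun τ => ((M τ).det)⁻¹ * (M τ).adjugate i j := by
    funext τ
    rw [Matrix.inv_def, Matrix.smul_apply, Ring.inverse_eq_inv', smul_eq_mul]
  rw [hrep]
  exact ((det_differentiableAt h).inv hdet).mul (adjugate_differentiableAt h i j)



noncomputable def dpCLM (a : Fin n → ℝ) : (Fin n → ℝ) →L[ℝ] ℝ :=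
  ∑ i, a i • (ContinuousLinearMap.proj (R := ℝ) (φ := fun _ : Fin n => ℝ) i)

lemma dpCLM_apply (a w : Fin n → ℝ) : dpCLM a w = a ⬝ᵥ w := by
  simp [dpCLM, dotProduct]

lemma hasFDerivAt_coord (k : Fin n) (m : Fin n → ℝ) (z : Fin n → ℝ) :
    HasFDerivAt (fun z : Fin n → ℝ => z k - m k)
      (ContinuousLinearMap.proj (R := ℝ) (φ := fun _ : Fin n => ℝ) k) z :=
  ((ContinuousLinearMap.proj (R := ℝ) (φ := fun _ : Fin n => ℝ) k).hasFDerivAt).sub_const _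

lemma hasFDerivAt_row (S : Matrix (Fin n) (Fin n) ℝ) (i : Fin n) (m z : Fin n → ℝ) :
    HasFDerivAt (fun z : Fin n → ℝ => ∑ k, S i k * (z k - m k)) (dpCLM (fun k => S i k)) z :=
  HasFDerivAt.fun_sum (fun k _ => (hasFDerivAt_coord k m z).const_mul (S i k))

lemma hasFDerivAt_quadForm (S : Matrix (Fin n) (Fin n) ℝ) (hS : Sᵀ = S) (m z : Fin n → ℝ) :
    HasFDerivAt (fun z : Fin n → ℝ => S *ᵥ (z - m) ⬝ᵥ (z - m))
      ((2:ℝ) • dpCLM (S *ᵥ (z - m))) z := by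
  have hbig : HasFDerivAt (fun z : Fin n → ℝ => ∑ i, (∑ k, S i k * (z k - m k)) * (z i - m i))
      (∑ i, ((∑ k, S i k * (z k - m k)) •
          (ContinuousLinearMap.proj (R := ℝ) (φ := fun _ : Fin n => ℝ) i)
        + (z i - m i) • dpCLM (fun k => S i k))) z :=
    HasFDerivAt.fun_sum (fun i _ => (hasFDerivAt_row S i m z).mul (hasFDerivAt_coord i m z))
  have hfun : (fun z : Fin n → ℝ => S *ᵥ (z - m) ⬝ᵥ (z - m))
      = fun z : Fin n → ℝ => ∑ i, (∑ k, S i k * (z k - m k)) * (z i - m i) := by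
    funext z; simp [Matrix.mulVec, dotProduct]
  have hclm : (∑ i, ((∑ k, S i k * (z k - m k)) •
          (ContinuousLinearMap.proj (R := ℝ) (φ := fun _ : Fin n => ℝ) i)
        + (z i - m i) • dpCLM (fun k => S i k)))
      = (2:ℝ) • dpCLM (S *ᵥ (z - m)) := by
    ext w
    simp only [ContinuousLinearMap.sum_apply, ContinuousLinearMap.add_apply,
      ContinuousLinearMap.smul_apply, ContinuousLinearMap.proj_apply, dpCLM_apply,
      smul_eq_mul]
    have h1 : ∀ i, (S *ᵥ (z - m)) i = ∑ k, S i k * (z k - m k) := by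
      intro i; simp [Matrix.mulVec, dotProduct]
    have hsym : ∀ i k, S i k = S k i := by
      intro i k; conv_lhs => rw [← hS]
      simp [Matrix.transpose_apply]
    have h2 : ∑ i, (z i - m i) * ((fun k => S i k) ⬝ᵥ w) = ∑ i, (S *ᵥ (z - m)) i * w i := by
      simp only [dotProduct, Finset.mul_sum, Finset.sum_mul, h1]
      rw [Finset.sum_comm]
      refine Finset.sum_congr rfl fun i _ => Finset.sum_congr rfl fun k _ => ?_
      rw [hsym k i]; ring
    simp only [dotProduct] at h2 ⊢
    simp_rw [← h1] at h2 ⊢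
    rw [Finset.sum_add_distrib, h2, two_mul]
  rw [hfun, ← hclm]
  exact hbig

lemma gaussian_hasFDerivAt (S : Matrix (Fin n) (Fin n) ℝ) (hS : Sᵀ = S) (m : Fin n → ℝ)
    (K : ℝ) (z : Fin n → ℝ) :
    HasFDerivAt (fun z : Fin n → ℝ => K * Real.exp (-(1/2) * (S *ᵥ (z - m) ⬝ᵥ (z - m))))
      ((-(K * Real.exp (-(1/2) * (S *ᵥ (z - m) ⬝ᵥ (z - m))))) • dpCLM (S *ᵥ (z - m))) z := by
  have h := (((hasFDerivAt_quadForm S hS m z).const_mul (-(1/2):ℝ)).exp).const_mul K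
  refine h.congr_fderiv ?_
  ext w
  simp only [ContinuousLinearMap.smul_apply, dpCLM_apply, smul_eq_mul]
  ring

lemma gaussian_fderiv_single (S : Matrix (Fin n) (Fin n) ℝ) (hS : Sᵀ = S) (m : Fin n → ℝ)
    (K : ℝ) (z : Fin n → ℝ) (j : Fin n) :
    fderiv ℝ (fun z : Fin n → ℝ => K * Real.exp (-(1/2) * (S *ᵥ (z - m) ⬝ᵥ (z - m)))) z
        (Pi.single j 1)
      = -(S *ᵥ (z - m)) j * (K * Real.exp (-(1/2) * (S *ᵥ (z - m) ⬝ᵥ (z - m)))) := by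
  rw [(gaussian_hasFDerivAt S hS m K z).fderiv]
  simp only [ContinuousLinearMap.smul_apply, dpCLM_apply, smul_eq_mul, dotProduct_single]
  ring

lemma gaussian_fderiv2 (S : Matrix (Fin n) (Fin n) ℝ) (hS : Sᵀ = S) (m : Fin n → ℝ)
    (K : ℝ) (y : Fin n → ℝ) (i j : Fin n) :
    fderiv ℝ (fun z : Fin n → ℝ =>
        fderiv ℝ (fun z : Fin n → ℝ => K * Real.exp (-(1/2) * (S *ᵥ (z - m) ⬝ᵥ (z - m)))) z
          (Pi.single j 1)) y (Pi.single i 1)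
      = ((S *ᵥ (y - m)) j * (S *ᵥ (y - m)) i - S j i)
          * (K * Real.exp (-(1/2) * (S *ᵥ (y - m) ⬝ᵥ (y - m)))) := by
  have hfe : (fun z : Fin n → ℝ =>
      fderiv ℝ (fun z : Fin n → ℝ => K * Real.exp (-(1/2) * (S *ᵥ (z - m) ⬝ᵥ (z - m)))) z
        (Pi.single j 1))
      = fun z : Fin n → ℝ => (-(∑ k, S j k * (z k - m k)))
          * (K * Real.exp (-(1/2) * (S *ᵥ (z - m) ⬝ᵥ (z - m)))) := by
    funext z
    rw [gaussian_fderiv_single S hS m K z j]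
    have : (S *ᵥ (z - m)) j = ∑ k, S j k * (z k - m k) := by
      simp [Matrix.mulVec, dotProduct]
    rw [this]
  rw [hfe]
  have hg : HasFDerivAt (fun z : Fin n → ℝ => -(∑ k, S j k * (z k - m k)))
      (-(dpCLM fun k => S j k)) y := (hasFDerivAt_row S j m y).neg
  have hmul := hg.fun_mul (gaussian_hasFDerivAt S hS m K y)
  rw [hmul.fderiv]
  simp only [ContinuousLinearMap.add_apply, ContinuousLinearMap.smul_apply,
    ContinuousLinearMap.neg_apply, dpCLM_apply, smul_eq_mul, dotProduct_single]
  have h1 : (S *ᵥ (y - m)) j = ∑ k, S j k * (y k - m k) := by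
    simp [Matrix.mulVec, dotProduct]
  rw [← h1]
  ring

/-- entrywise product rule for matrix-valued functions -/
lemma mulEntry_hasDerivAt {A C : ℝ → Matrix (Fin n) (Fin n) ℝ} {A' C' : Matrix (Fin n) (Fin n) ℝ}
    {t : ℝ} (hA : ∀ i j, HasDerivAt (fun τ => A τ i j) (A' i j) t)
    (hC : ∀ i j, HasDerivAt (fun τ => C τ i j) (C' i j) t) (i j : Fin n) :
    HasDerivAt (fun τ => (A τ * C τ) i j) ((A' * C t + A t * C') i j) t := by
  have hrep : (fun τ => (A τ * C τ) i j) = fun τ => ∑ k, A τ i k * C τ k j :=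
    funext fun τ => Matrix.mul_apply
  have hval : (A' * C t + A t * C') i j = ∑ k, (A' i k * C t k j + A t i k * C' k j) := by
    simp [Matrix.mul_apply, Matrix.add_apply, Finset.sum_add_distrib]
  rw [hrep, hval]
  exact HasDerivAt.fun_sum fun k _ => ((hA i k).mul (hC k j))

lemma constEntry_hasDerivAt (C : Matrix (Fin n) (Fin n) ℝ) (t : ℝ) (i j : Fin n) :
    HasDerivAt (fun _ : ℝ => C i j) ((0 : Matrix (Fin n) (Fin n) ℝ) i j) t := by
  simpa using hasDerivAt_const t (C i j)

lemma tripleEntry_hasDerivAt (B D : Matrix (Fin n) (Fin n) ℝ) (r : ℝ) (i j : Fin n) :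
    HasDerivAt (fun s : ℝ => (NormedSpace.exp (s • Dᵀ) * B * NormedSpace.exp (s • D)) i j)
      ((Dᵀ * (NormedSpace.exp (r • Dᵀ) * B * NormedSpace.exp (r • D))
        + (NormedSpace.exp (r • Dᵀ) * B * NormedSpace.exp (r • D)) * D) i j) r := by
  have h1 : ∀ i j, HasDerivAt (fun s : ℝ => (NormedSpace.exp (s • Dᵀ) * B) i j)
      ((Dᵀ * NormedSpace.exp (r • Dᵀ) * B) i j) r := by
    intro i j
    have := mulEntry_hasDerivAt (A := fun s => NormedSpace.exp (s • Dᵀ)) (C := fun _ => B)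
      (A' := Dᵀ * NormedSpace.exp (r • Dᵀ)) (C' := 0)
      (fun i j => expEntry_hasDerivAt' Dᵀ r i j) (constEntry_hasDerivAt B r) i j
    simpa using this
  have h2 := mulEntry_hasDerivAt (A := fun s => NormedSpace.exp (s • Dᵀ) * B)
      (C := fun s => NormedSpace.exp (s • D))
      (A' := Dᵀ * NormedSpace.exp (r • Dᵀ) * B)
      (C' := NormedSpace.exp (r • D) * D) h1 (fun i j => expEntry_hasDerivAt D r i j) i j
  have hval : (Dᵀ * NormedSpace.exp (r • Dᵀ) * B * NormedSpace.exp (r • D)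
        + (NormedSpace.exp (r • Dᵀ) * B) * (NormedSpace.exp (r • D) * D))
      = (Dᵀ * (NormedSpace.exp (r • Dᵀ) * B * NormedSpace.exp (r • D))
        + (NormedSpace.exp (r • Dᵀ) * B * NormedSpace.exp (r • D)) * D) := by
    simp only [Matrix.mul_assoc]
  rw [← hval]
  exact h2

lemma tripleEntry_continuous (B D : Matrix (Fin n) (Fin n) ℝ) (i j : Fin n) :
    Continuous (fun s : ℝ =>
      (NormedSpace.exp (s • Dᵀ) * B * NormedSpace.exp (s • D)) i j) :=
  continuous_iff_continuousAt.2 fun r => (tripleEntry_hasDerivAt B D r i j).continuousAt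

lemma triple_continuous (B D : Matrix (Fin n) (Fin n) ℝ) :
    Continuous (fun s : ℝ => NormedSpace.exp (s • Dᵀ) * B * NormedSpace.exp (s • D)) :=
  continuous_matrix fun i j => tripleEntry_continuous B D i j

lemma Qentry (B D : Matrix (Fin n) (Fin n) ℝ) (t : ℝ) (i j : Fin n) :
    (∫ r in (0:ℝ)..t, NormedSpace.exp (r • Dᵀ) * B * NormedSpace.exp (r • D)) i j
      = ∫ r in (0:ℝ)..t,
          (NormedSpace.exp (r • Dᵀ) * B * NormedSpace.exp (r • D)) i j := by
  letI : ENormedAddMonoid (Matrix (Fin n) (Fin n) ℝ) :=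
    NormedAddCommGroup.toENormedAddCommMonoid.toENormedAddMonoid
  have hint : IntervalIntegrable
      (fun r : ℝ => NormedSpace.exp (r • Dᵀ) * B * NormedSpace.exp (r • D))
      MeasureTheory.volume 0 t := (triple_continuous B D).intervalIntegrable 0 t
  have := ((Matrix.entryLinearMap ℝ ℝ i j).toContinuousLinearMap).intervalIntegral_comp_comm hint
  exact this.symm

lemma Qentry_hasDerivAt (B D : Matrix (Fin n) (Fin n) ℝ) (t : ℝ) (i j : Fin n) :
    HasDerivAt (fun τ : ℝ =>
        (∫ r in (0:ℝ)..τ, NormedSpace.exp (r • Dᵀ) * B * NormedSpace.exp (r • D)) i j)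
      ((NormedSpace.exp (t • Dᵀ) * B * NormedSpace.exp (t • D)) i j) t := by
  have hrep : (fun τ : ℝ =>
      (∫ r in (0:ℝ)..τ, NormedSpace.exp (r • Dᵀ) * B * NormedSpace.exp (r • D)) i j)
      = fun τ : ℝ => ∫ r in (0:ℝ)..τ,
          (NormedSpace.exp (r • Dᵀ) * B * NormedSpace.exp (r • D)) i j :=
    funext fun τ => Qentry B D τ i j
  rw [hrep]
  exact ((tripleEntry_continuous B D i j).integral_hasStrictDerivAt 0 t).hasDerivAt

lemma lyapunov (B D : Matrix (Fin n) (Fin n) ℝ) (t : ℝ) :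
    NormedSpace.exp (t • Dᵀ) * B * NormedSpace.exp (t • D)
      = B + Dᵀ * (∫ r in (0:ℝ)..t, NormedSpace.exp (r • Dᵀ) * B * NormedSpace.exp (r • D))
          + (∫ r in (0:ℝ)..t, NormedSpace.exp (r • Dᵀ) * B * NormedSpace.exp (r • D)) * D := by
  have hP0 : NormedSpace.exp ((0:ℝ) • Dᵀ) * B * NormedSpace.exp ((0:ℝ) • D) = B := by
    simp [zero_smul, NormedSpace.exp_zero]
  ext i j
  have h1 : Continuous (fun r : ℝ =>
      ∑ k, Dᵀ i k * (NormedSpace.exp (r • Dᵀ) * B * NormedSpace.exp (r • D)) k j) :=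
    continuous_finset_sum _ fun k _ => continuous_const.mul (tripleEntry_continuous B D k j)
  have h2 : Continuous (fun r : ℝ =>
      ∑ k, (NormedSpace.exp (r • Dᵀ) * B * NormedSpace.exp (r • D)) i k * D k j) :=
    continuous_finset_sum _ fun k _ => (tripleEntry_continuous B D i k).mul continuous_const
  have hfe : (fun r : ℝ =>
      (Dᵀ * (NormedSpace.exp (r • Dᵀ) * B * NormedSpace.exp (r • D))
        + (NormedSpace.exp (r • Dᵀ) * B * NormedSpace.exp (r • D)) * D) i j)
      = fun r : ℝ =>
        (∑ k, Dᵀ i k * (NormedSpace.exp (r • Dᵀ) * B * NormedSpace.exp (r • D)) k j)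
        + (∑ k, (NormedSpace.exp (r • Dᵀ) * B * NormedSpace.exp (r • D)) i k * D k j) := by
    funext r; simp [Matrix.mul_apply, Matrix.add_apply]
  have hcontD : Continuous (fun r : ℝ =>
      (Dᵀ * (NormedSpace.exp (r • Dᵀ) * B * NormedSpace.exp (r • D))
        + (NormedSpace.exp (r • Dᵀ) * B * NormedSpace.exp (r • D)) * D) i j) := by
    rw [hfe]; exact h1.add h2
  have hftc : (∫ r in (0:ℝ)..t,
      (Dᵀ * (NormedSpace.exp (r • Dᵀ) * B * NormedSpace.exp (r • D))
        + (NormedSpace.exp (r • Dᵀ) * B * NormedSpace.exp (r • D)) * D) i j)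
      = (NormedSpace.exp (t • Dᵀ) * B * NormedSpace.exp (t • D)) i j - B i j := by
    have := intervalIntegral.integral_eq_sub_of_hasDerivAt
      (f := fun s : ℝ => (NormedSpace.exp (s • Dᵀ) * B * NormedSpace.exp (s • D)) i j)
      (f' := fun r : ℝ =>
        (Dᵀ * (NormedSpace.exp (r • Dᵀ) * B * NormedSpace.exp (r • D))
          + (NormedSpace.exp (r • Dᵀ) * B * NormedSpace.exp (r • D)) * D) i j)
      (fun r _ => tripleEntry_hasDerivAt B D r i j) (hcontD.intervalIntegrable 0 t)
    rw [this]
    simp [hP0]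
  have e2 : (Dᵀ * (∫ r in (0:ℝ)..t,
        NormedSpace.exp (r • Dᵀ) * B * NormedSpace.exp (r • D))) i j
      = ∫ r in (0:ℝ)..t,
        ∑ k, Dᵀ i k * (NormedSpace.exp (r • Dᵀ) * B * NormedSpace.exp (r • D)) k j := by
    conv_lhs => rw [Matrix.mul_apply]
    simp_rw [Qentry B D t]
    calc (∑ k, Dᵀ i k * ∫ r in (0:ℝ)..t,
          (NormedSpace.exp (r • Dᵀ) * B * NormedSpace.exp (r • D)) k j)
        = ∑ k, ∫ r in (0:ℝ)..t,
            Dᵀ i k * (NormedSpace.exp (r • Dᵀ) * B * NormedSpace.exp (r • D)) k j :=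
          Finset.sum_congr rfl fun k _ => (intervalIntegral.integral_const_mul _ _).symm
      _ = _ := (intervalIntegral.integral_finset_sum fun k _ =>
          (continuous_const.mul (tripleEntry_continuous B D k j)).intervalIntegrable 0 t).symm
  have e3 : ((∫ r in (0:ℝ)..t,
        NormedSpace.exp (r • Dᵀ) * B * NormedSpace.exp (r • D)) * D) i j
      = ∫ r in (0:ℝ)..t,
        ∑ k, (NormedSpace.exp (r • Dᵀ) * B * NormedSpace.exp (r • D)) i k * D k j := by
    conv_lhs => rw [Matrix.mul_apply]
    simp_rw [Qentry B D t]
    calc (∑ k, (∫ r in (0:ℝ)..t,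
          (NormedSpace.exp (r • Dᵀ) * B * NormedSpace.exp (r • D)) i k) * D k j)
        = ∑ k, ∫ r in (0:ℝ)..t,
            (NormedSpace.exp (r • Dᵀ) * B * NormedSpace.exp (r • D)) i k * D k j :=
          Finset.sum_congr rfl fun k _ => (intervalIntegral.integral_mul_const _ _).symm
      _ = _ := (intervalIntegral.integral_finset_sum fun k _ =>
          ((tripleEntry_continuous B D i k).mul continuous_const).intervalIntegrable 0 t).symm
  rw [hfe] at hftc
  rw [intervalIntegral.integral_add (h1.intervalIntegrable 0 t)
      (h2.intervalIntegrable 0 t)] at hftc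
  simp only [Matrix.add_apply]
  rw [e2, e3]
  linarith [hftc]


lemma dot_shift (A : Matrix (Fin n) (Fin n) ℝ) (w z : Fin n → ℝ) :
    (A *ᵥ w) ⬝ᵥ z = w ⬝ᵥ (Aᵀ *ᵥ z) := by
  simp only [dotProduct, Matrix.mulVec, Finset.sum_mul, Finset.mul_sum]
  rw [Finset.sum_comm]
  exact Finset.sum_congr rfl fun i _ => Finset.sum_congr rfl fun k _ => by
    rw [Matrix.transpose_apply]; ring

lemma trace_hess (Bm Sm : Matrix (Fin n) (Fin n) ℝ) (hSm : ∀ a b, Sm a b = Sm b a)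
    (w : Fin n → ℝ) (c : ℝ) :
    (Bm * Matrix.of (fun i j => (w j * w i - Sm j i) * c)).trace
      = (w ⬝ᵥ (Bm *ᵥ w) - (Bm * Sm).trace) * c := by
  simp only [Matrix.trace, Matrix.diag, Matrix.mul_apply, Matrix.of_apply,
    Matrix.mulVec, dotProduct]
  rw [sub_mul, Finset.sum_mul, Finset.sum_mul, ← Finset.sum_sub_distrib]
  refine Finset.sum_congr rfl fun p _ => ?_
  rw [Finset.mul_sum, Finset.sum_mul, Finset.sum_mul, ← Finset.sum_sub_distrib]
  refine Finset.sum_congr rfl fun k _ => ?_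
  rw [hSm k p]
  ring

end Aux


/-- **Theorems 2 and 3 of the paper combined (finite-dimensional case, C = 0).**
With `B` symmetric positive definite, `D` arbitrary, `α : ℝ`, `x ∈ ℝⁿ`,
`Q(t) = ∫₀ᵗ e^{rDᵀ}·B·e^{rD} dr` (symmetric positive definite for `t > 0`) and
`R(t) = e^{tDᵀ}`, the density
`u(t,y) = e^{αt}(2π)^{−n/2}(det Q(t))^{−1/2}·exp(−½⟨Q(t)⁻¹(y−R(t)x), y−R(t)x⟩)` solves
`∂u/∂t = ½ tr(B·Hess_y u) − (⟨∇_y u, Dᵀy⟩ + tr(D)·u) + αu` for all `t > 0`, `y ∈ ℝⁿ`. -/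
theorem ornstein_uhlenbeck_density_solves_equation
    {n : ℕ} (B D : Matrix (Fin n) (Fin n) ℝ)
    (hBsymm : B.IsSymm) (hBpos : B.PosDef) (α : ℝ) (x : Fin n → ℝ)
    (Q R : ℝ → Matrix (Fin n) (Fin n) ℝ)
    (hQ : Q = fun t : ℝ => ∫ r in (0:ℝ)..t,
      NormedSpace.exp (r • Dᵀ) * B * NormedSpace.exp (r • D))
    (hQpos : ∀ t : ℝ, 0 < t → (Q t).PosDef)
    (hR : R = fun t : ℝ => NormedSpace.exp (t • Dᵀ))
    (u : ℝ → (Fin n → ℝ) → ℝ)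
    (hu : u = fun (t : ℝ) (y : Fin n → ℝ) =>
      Real.exp (α * t) * ((2 * Real.pi) ^ (-(n:ℝ)/2) * (Q t).det ^ (-(1:ℝ)/2) *
        Real.exp (-(1/2) * ((Q t)⁻¹ *ᵥ (y - R t *ᵥ x) ⬝ᵥ (y - R t *ᵥ x))))) :
    ∀ t : ℝ, 0 < t → ∀ y : Fin n → ℝ,
      deriv (fun τ : ℝ => u τ y) t =
        (1/2) * (B * Matrix.of (fun i j : Fin n =>
            fderiv ℝ (fun z : Fin n → ℝ => fderiv ℝ (u t) z (Pi.single j 1)) y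
              (Pi.single i 1))).trace
          - (((fun i : Fin n => fderiv ℝ (u t) y (Pi.single i 1)) ⬝ᵥ (Dᵀ *ᵥ y))
              + D.trace * u t y)
          + α * u t y := by
  intro t ht y
  have hQQ : ∀ s : ℝ, Q s = ∫ r in (0:ℝ)..s, NormedSpace.exp (r • Dᵀ) * B * NormedSpace.exp (r • D) := fun s => by rw [hQ]
  have hdetpos : 0 < (Q t).det := (hQpos t ht).det_pos
  have hdetne : (Q t).det ≠ 0 := ne_of_gt hdetpos
  have hdetunit : IsUnit (Q t).det := isUnit_iff_ne_zero.mpr hdetne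
  have hQS : Q t * (Q t)⁻¹ = 1 := Matrix.mul_nonsing_inv _ hdetunit
  have hSQ : (Q t)⁻¹ * Q t = 1 := Matrix.nonsing_inv_mul _ hdetunit
  -- symmetry facts
  have hPsym : ∀ r : ℝ, (NormedSpace.exp (r • Dᵀ) * B * NormedSpace.exp (r • D))ᵀ = NormedSpace.exp (r • Dᵀ) * B * NormedSpace.exp (r • D) := by
    intro r
    have h2 : (NormedSpace.exp (r • D))ᵀ = NormedSpace.exp (r • Dᵀ) := by
      rw [← Matrix.exp_transpose, Matrix.transpose_smul]
    have h1 : (NormedSpace.exp (r • Dᵀ))ᵀ = NormedSpace.exp (r • D) := by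
      rw [← Matrix.exp_transpose, Matrix.transpose_smul, Matrix.transpose_transpose]
    rw [Matrix.transpose_mul, Matrix.transpose_mul, h2, h1, hBsymm.eq, ← Matrix.mul_assoc]
  have hQsym : (Q t)ᵀ = Q t := by
    ext i j
    rw [Matrix.transpose_apply, hQQ t, Qentry B D t, Qentry B D t]
    have hpe : ∀ r : ℝ, (NormedSpace.exp (r • Dᵀ) * B * NormedSpace.exp (r • D)) j i = (NormedSpace.exp (r • Dᵀ) * B * NormedSpace.exp (r • D)) i j := by
      intro r
      conv_lhs => rw [← hPsym r]
      exact Matrix.transpose_apply _ _ _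
    simp_rw [hpe]
  have hSsym : ((Q t)⁻¹)ᵀ = (Q t)⁻¹ := by rw [Matrix.transpose_nonsing_inv, hQsym]
  have hSsym' : ∀ a b, (Q t)⁻¹ a b = (Q t)⁻¹ b a := by
    intro a b
    conv_lhs => rw [← hSsym]
    exact Matrix.transpose_apply _ _ _
  -- entry derivatives of Q
  have hQd : ∀ (s : ℝ) (i j : Fin n), HasDerivAt (fun τ => Q τ i j) ((NormedSpace.exp (s • Dᵀ) * B * NormedSpace.exp (s • D)) i j) s := by
    intro s i j
    have hfe : (fun τ => Q τ i j) = fun τ => (∫ r in (0:ℝ)..τ, NormedSpace.exp (r • Dᵀ) * B * NormedSpace.exp (r • D)) i j :=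
      funext fun τ => by rw [hQQ τ]
    rw [hfe]
    exact Qentry_hasDerivAt B D s i j
  -- Lyapunov equation
  have hPtEq : NormedSpace.exp (t • Dᵀ) * B * NormedSpace.exp (t • D) = B + Dᵀ * Q t + Q t * D := by
    have h := lyapunov B D t
    rw [← hQQ t] at h
    exact h
  -- determinant derivative
  have hdetD : HasDerivAt (fun τ => (Q τ).det) (((Q t).adjugate * (NormedSpace.exp (t • Dᵀ) * B * NormedSpace.exp (t • D))).trace) t := jacobi_det _ (hQd t)
  -- inverse entries
  have hQdiff : ∀ i j, DifferentiableAt ℝ (fun τ => Q τ i j) t :=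
    fun i j => (hQd t i j).differentiableAt
  have hSdiff : ∀ i j, DifferentiableAt ℝ (fun τ => (Q τ)⁻¹ i j) t :=
    inv_entry_differentiableAt hQdiff hdetne
  have hSd0 : ∀ i j, HasDerivAt (fun τ => (Q τ)⁻¹ i j) ((Matrix.of fun a b => deriv (fun τ => (Q τ)⁻¹ a b) t) i j) t := fun i j => by
    simpa using (hSdiff i j).hasDerivAt
  have hSQzero : (Matrix.of fun a b => deriv (fun τ => (Q τ)⁻¹ a b) t) * Q t + (Q t)⁻¹ * (NormedSpace.exp (t • Dᵀ) * B * NormedSpace.exp (t • D)) = 0 := by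
    ext i j
    have hprod : HasDerivAt (fun τ => ∑ k, (Q τ)⁻¹ i k * Q τ k j)
        (((Matrix.of fun a b => deriv (fun τ => (Q τ)⁻¹ a b) t) * Q t + (Q t)⁻¹ * (NormedSpace.exp (t • Dᵀ) * B * NormedSpace.exp (t • D))) i j) t := by
      have h := HasDerivAt.fun_sum (u := Finset.univ)
        (fun k (_ : k ∈ Finset.univ) => (hSd0 i k).mul (hQd t k j))
      have hval : (((Matrix.of fun a b => deriv (fun τ => (Q τ)⁻¹ a b) t) * Q t + (Q t)⁻¹ * (NormedSpace.exp (t • Dᵀ) * B * NormedSpace.exp (t • D))) i j)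
          = ∑ k, ((Matrix.of fun a b => deriv (fun τ => (Q τ)⁻¹ a b) t) i k * Q t k j + (Q t)⁻¹ i k * (NormedSpace.exp (t • Dᵀ) * B * NormedSpace.exp (t • D)) k j) := by
        simp [Matrix.mul_apply, Matrix.add_apply, Finset.sum_add_distrib]
      rw [hval]
      exact h
    have hconst : HasDerivAt (fun τ => ∑ k, (Q τ)⁻¹ i k * Q τ k j) 0 t := by
      have hev : (fun τ => ∑ k, (Q τ)⁻¹ i k * Q τ k j)
          =ᶠ[nhds t] fun _ => (1 : Matrix (Fin n) (Fin n) ℝ) i j := by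
        filter_upwards [Ioi_mem_nhds ht] with τ hτ
        rw [← Matrix.mul_apply,
          Matrix.nonsing_inv_mul _ (isUnit_iff_ne_zero.mpr (ne_of_gt (hQpos τ hτ).det_pos))]
      exact (hasDerivAt_const t _).congr_of_eventuallyEq hev
    have huniq := hprod.unique hconst
    simpa using huniq
  have hS'eq : (Matrix.of fun a b => deriv (fun τ => (Q τ)⁻¹ a b) t) = (-((Q t)⁻¹ * (NormedSpace.exp (t • Dᵀ) * B * NormedSpace.exp (t • D)) * (Q t)⁻¹)) := by
    have h1 : (Matrix.of fun a b => deriv (fun τ => (Q τ)⁻¹ a b) t) * Q t = -((Q t)⁻¹ * (NormedSpace.exp (t • Dᵀ) * B * NormedSpace.exp (t • D))) :=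
      eq_neg_of_add_eq_zero_left hSQzero
    calc (Matrix.of fun a b => deriv (fun τ => (Q τ)⁻¹ a b) t) = (Matrix.of fun a b => deriv (fun τ => (Q τ)⁻¹ a b) t) * (Q t * (Q t)⁻¹) := by rw [hQS, Matrix.mul_one]
      _ = ((Matrix.of fun a b => deriv (fun τ => (Q τ)⁻¹ a b) t) * Q t) * (Q t)⁻¹ := by rw [Matrix.mul_assoc]
      _ = (-((Q t)⁻¹ * (NormedSpace.exp (t • Dᵀ) * B * NormedSpace.exp (t • D)))) * (Q t)⁻¹ := by rw [h1]
      _ = (-((Q t)⁻¹ * (NormedSpace.exp (t • Dᵀ) * B * NormedSpace.exp (t • D)) * (Q t)⁻¹)) := by rw [Matrix.neg_mul]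
  have hSd : ∀ i j, HasDerivAt (fun τ => (Q τ)⁻¹ i j) (((-((Q t)⁻¹ * (NormedSpace.exp (t • Dᵀ) * B * NormedSpace.exp (t • D)) * (Q t)⁻¹))) i j) t := fun i j => by
    have h := hSd0 i j
    rw [hS'eq] at h
    exact h
  -- derivative of R/v entries
  have hRd : ∀ k l, HasDerivAt (fun τ => R τ k l) ((Dᵀ * R t) k l) t := by
    intro k l
    simp only [hR]
    exact expEntry_hasDerivAt' Dᵀ t k l
  have hvd : ∀ k, HasDerivAt (fun τ => y k - (R τ *ᵥ x) k) (((-((Dᵀ * R t) *ᵥ x))) k) t := by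
    intro k
    have h2 : HasDerivAt (fun τ => ∑ l, R τ k l * x l) (∑ l, (Dᵀ * R t) k l * x l) t :=
      HasDerivAt.fun_sum fun l _ => (hRd k l).mul_const (x l)
    have hfe : (fun τ => y k - (R τ *ᵥ x) k) = fun τ => y k - ∑ l, R τ k l * x l :=
      funext fun τ => by simp [Matrix.mulVec, dotProduct]
    have hval : ((-((Dᵀ * R t) *ᵥ x))) k = -(∑ l, (Dᵀ * R t) k l * x l) := by
      simp [Matrix.mulVec, dotProduct]
    rw [hfe, hval]
    exact h2.const_sub (y k)
  -- derivative of the quadratic form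
  have hq : HasDerivAt (fun τ => (Q τ)⁻¹ *ᵥ (y - R τ *ᵥ x) ⬝ᵥ (y - R τ *ᵥ x)) (((-((Q t)⁻¹ * (NormedSpace.exp (t • Dᵀ) * B * NormedSpace.exp (t • D)) * (Q t)⁻¹)) *ᵥ (y - R t *ᵥ x)) ⬝ᵥ (y - R t *ᵥ x) + ((Q t)⁻¹ *ᵥ (-((Dᵀ * R t) *ᵥ x))) ⬝ᵥ (y - R t *ᵥ x) + ((Q t)⁻¹ *ᵥ (y - R t *ᵥ x)) ⬝ᵥ (-((Dᵀ * R t) *ᵥ x))) t := by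
    have hinner : ∀ i, HasDerivAt (fun τ => ∑ k, (Q τ)⁻¹ i k * (y k - (R τ *ᵥ x) k))
        (∑ k, (((-((Q t)⁻¹ * (NormedSpace.exp (t • Dᵀ) * B * NormedSpace.exp (t • D)) * (Q t)⁻¹))) i k * (y k - (R t *ᵥ x) k) + (Q t)⁻¹ i k * ((-((Dᵀ * R t) *ᵥ x))) k)) t :=
      fun i => HasDerivAt.fun_sum fun k _ => (hSd i k).fun_mul (hvd k)
    have houter := HasDerivAt.fun_sum (u := Finset.univ)
      (fun i (_ : i ∈ Finset.univ) => (hinner i).fun_mul (hvd i))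
    have hfe : (fun τ => (Q τ)⁻¹ *ᵥ (y - R τ *ᵥ x) ⬝ᵥ (y - R τ *ᵥ x))
        = fun τ => ∑ i, (∑ k, (Q τ)⁻¹ i k * (y k - (R τ *ᵥ x) k)) * (y i - (R τ *ᵥ x) i) :=
      funext fun τ => by simp [Matrix.mulVec, dotProduct]
    rw [hfe]
    refine houter.congr_deriv ?_
    symm
    simp [Matrix.mulVec, dotProduct, Finset.sum_add_distrib, add_mul,
      Finset.sum_mul, Finset.mul_sum, Pi.sub_apply]
  -- time derivative assembly
  have h1 : HasDerivAt (fun τ => Real.exp (α * τ)) (Real.exp (α * t) * α) t := by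
    simpa using ((hasDerivAt_id t).const_mul α).exp
  have hdetpow : HasDerivAt (fun τ => (Q τ).det ^ (-(1:ℝ)/2))
      ((((Q t).adjugate * (NormedSpace.exp (t • Dᵀ) * B * NormedSpace.exp (t • D))).trace) * (-(1:ℝ)/2) * (Q t).det ^ (-(1:ℝ)/2 - 1)) t :=
    hdetD.rpow_const (Or.inl hdetne)
  have hexp2 := (hq.const_mul (-(1/2) : ℝ)).exp
  have hinner2 := (hdetpow.const_mul ((2 * Real.pi) ^ (-(n:ℝ)/2))).fun_mul hexp2
  have htime := h1.fun_mul hinner2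
  rw [show (fun τ : ℝ => u τ y) = fun τ => Real.exp (α * τ) *
      ((2 * Real.pi) ^ (-(n:ℝ)/2) * (Q τ).det ^ (-(1:ℝ)/2) *
        Real.exp (-(1/2) * ((Q τ)⁻¹ *ᵥ (y - R τ *ᵥ x) ⬝ᵥ (y - R τ *ᵥ x))))
    from funext fun τ => by rw [hu]]
  rw [htime.deriv]
  -- spatial derivatives
  have hufix : u t = fun z => (Real.exp (α * t) * ((2 * Real.pi) ^ (-(n:ℝ)/2) * (Q t).det ^ (-(1:ℝ)/2))) *
      Real.exp (-(1/2) * ((Q t)⁻¹ *ᵥ (z - R t *ᵥ x) ⬝ᵥ (z - R t *ᵥ x))) := by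
    simp only [hu]
    funext z
    ring
  have hUy : u t y = (Real.exp (α * t) * ((2 * Real.pi) ^ (-(n:ℝ)/2) * (Q t).det ^ (-(1:ℝ)/2))) * Real.exp (-(1/2) * ((Q t)⁻¹ *ᵥ (y - R t *ᵥ x) ⬝ᵥ (y - R t *ᵥ x))) := by rw [hufix]
  have hgradj : ∀ j, fderiv ℝ (u t) y (Pi.single j 1) = -(((Q t)⁻¹ *ᵥ (y - R t *ᵥ x))) j * ((Real.exp (α * t) * ((2 * Real.pi) ^ (-(n:ℝ)/2) * (Q t).det ^ (-(1:ℝ)/2))) * Real.exp (-(1/2) * ((Q t)⁻¹ *ᵥ (y - R t *ᵥ x) ⬝ᵥ (y - R t *ᵥ x)))) := by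
    intro j
    rw [hufix]
    exact gaussian_fderiv_single _ hSsym _ _ y j
  have hH : ∀ i j, fderiv ℝ (fun z => fderiv ℝ (u t) z (Pi.single j 1)) y (Pi.single i 1)
      = ((((Q t)⁻¹ *ᵥ (y - R t *ᵥ x))) j * (((Q t)⁻¹ *ᵥ (y - R t *ᵥ x))) i - (Q t)⁻¹ j i) * ((Real.exp (α * t) * ((2 * Real.pi) ^ (-(n:ℝ)/2) * (Q t).det ^ (-(1:ℝ)/2))) * Real.exp (-(1/2) * ((Q t)⁻¹ *ᵥ (y - R t *ᵥ x) ⬝ᵥ (y - R t *ᵥ x)))) := by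
    intro i j
    rw [hufix]
    exact gaussian_fderiv2 _ hSsym _ _ y i j
  have hofeq : Matrix.of (fun i j : Fin n =>
        fderiv ℝ (fun z : Fin n → ℝ => fderiv ℝ (u t) z (Pi.single j 1)) y (Pi.single i 1))
      = Matrix.of (fun i j : Fin n => ((((Q t)⁻¹ *ᵥ (y - R t *ᵥ x))) j * (((Q t)⁻¹ *ᵥ (y - R t *ᵥ x))) i - (Q t)⁻¹ j i) * ((Real.exp (α * t) * ((2 * Real.pi) ^ (-(n:ℝ)/2) * (Q t).det ^ (-(1:ℝ)/2))) * Real.exp (-(1/2) * ((Q t)⁻¹ *ᵥ (y - R t *ᵥ x) ⬝ᵥ (y - R t *ᵥ x))))) := by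
    ext i j
    simp only [Matrix.of_apply]
    exact hH i j
  have htr : (B * Matrix.of (fun i j : Fin n =>
        fderiv ℝ (fun z : Fin n → ℝ => fderiv ℝ (u t) z (Pi.single j 1)) y
          (Pi.single i 1))).trace
      = (((Q t)⁻¹ *ᵥ (y - R t *ᵥ x)) ⬝ᵥ (B *ᵥ ((Q t)⁻¹ *ᵥ (y - R t *ᵥ x))) - (B * (Q t)⁻¹).trace) * ((Real.exp (α * t) * ((2 * Real.pi) ^ (-(n:ℝ)/2) * (Q t).det ^ (-(1:ℝ)/2))) * Real.exp (-(1/2) * ((Q t)⁻¹ *ᵥ (y - R t *ᵥ x) ⬝ᵥ (y - R t *ᵥ x)))) := by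
    rw [hofeq]
    exact trace_hess B ((Q t)⁻¹) hSsym' (((Q t)⁻¹ *ᵥ (y - R t *ᵥ x))) _
  have hgs : (fun i : Fin n => fderiv ℝ (u t) y (Pi.single i 1)) ⬝ᵥ (Dᵀ *ᵥ y)
      = -(((Q t)⁻¹ *ᵥ (y - R t *ᵥ x)) ⬝ᵥ (Dᵀ *ᵥ y)) * ((Real.exp (α * t) * ((2 * Real.pi) ^ (-(n:ℝ)/2) * (Q t).det ^ (-(1:ℝ)/2))) * Real.exp (-(1/2) * ((Q t)⁻¹ *ᵥ (y - R t *ᵥ x) ⬝ᵥ (y - R t *ᵥ x)))) := by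
    have hfe2 : (fun i : Fin n => fderiv ℝ (u t) y (Pi.single i 1))
        = (-((Real.exp (α * t) * ((2 * Real.pi) ^ (-(n:ℝ)/2) * (Q t).det ^ (-(1:ℝ)/2))) * Real.exp (-(1/2) * ((Q t)⁻¹ *ᵥ (y - R t *ᵥ x) ⬝ᵥ (y - R t *ᵥ x))))) • ((Q t)⁻¹ *ᵥ (y - R t *ᵥ x)) := by
      funext i
      rw [hgradj i]
      simp only [Pi.smul_apply, smul_eq_mul]
      ring
    rw [hfe2, smul_dotProduct, smul_eq_mul]
    ring
  -- key matrix identities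
  have k1 : ((Q t).adjugate * (NormedSpace.exp (t • Dᵀ) * B * NormedSpace.exp (t • D))).trace = (Q t).det * ((B * (Q t)⁻¹).trace + 2 * D.trace) := by
    have hadj : (Q t).adjugate = (Q t).det • (Q t)⁻¹ := by
      rw [Matrix.inv_def, Ring.inverse_eq_inv', smul_smul, mul_inv_cancel₀ hdetne, one_smul]
    rw [hadj, Matrix.smul_mul, Matrix.trace_smul, smul_eq_mul]
    congr 1
    rw [hPtEq, Matrix.mul_add, Matrix.mul_add, Matrix.trace_add, Matrix.trace_add]
    have e1 : ((Q t)⁻¹ * (Dᵀ * Q t)).trace = D.trace := by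
      rw [Matrix.trace_mul_comm, Matrix.mul_assoc, hQS, Matrix.mul_one, Matrix.trace_transpose]
    have e2 : ((Q t)⁻¹ * (Q t * D)).trace = D.trace := by
      rw [← Matrix.mul_assoc, hSQ, Matrix.one_mul]
    rw [e1, e2, Matrix.trace_mul_comm]
    ring
  have k2 : ((-((Q t)⁻¹ * (NormedSpace.exp (t • Dᵀ) * B * NormedSpace.exp (t • D)) * (Q t)⁻¹)) *ᵥ (y - R t *ᵥ x)) ⬝ᵥ (y - R t *ᵥ x)
      = -(((Q t)⁻¹ *ᵥ (y - R t *ᵥ x)) ⬝ᵥ (B *ᵥ ((Q t)⁻¹ *ᵥ (y - R t *ᵥ x))) + 2 * (((Q t)⁻¹ *ᵥ (y - R t *ᵥ x)) ⬝ᵥ (Dᵀ *ᵥ (y - R t *ᵥ x)))) := by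
    have hexp : (Q t)⁻¹ * (NormedSpace.exp (t • Dᵀ) * B * NormedSpace.exp (t • D)) * (Q t)⁻¹ = (Q t)⁻¹ * B * (Q t)⁻¹ + (Q t)⁻¹ * Dᵀ + D * (Q t)⁻¹ := by
      rw [hPtEq]
      have hnc : (Q t)⁻¹ * (B + Dᵀ * Q t + Q t * D) * (Q t)⁻¹
          = (Q t)⁻¹ * B * (Q t)⁻¹ + ((Q t)⁻¹ * Dᵀ) * (Q t * (Q t)⁻¹) + ((Q t)⁻¹ * Q t) * (D * (Q t)⁻¹) := by
        noncomm_ring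
      rw [hnc, hQS, hSQ, Matrix.mul_one, Matrix.one_mul]
    rw [Matrix.neg_mulVec, neg_dotProduct, hexp]
    rw [Matrix.add_mulVec, Matrix.add_mulVec, add_dotProduct, add_dotProduct]
    have p1 : (((Q t)⁻¹ * B * (Q t)⁻¹) *ᵥ (y - R t *ᵥ x)) ⬝ᵥ (y - R t *ᵥ x) = ((Q t)⁻¹ *ᵥ (y - R t *ᵥ x)) ⬝ᵥ (B *ᵥ ((Q t)⁻¹ *ᵥ (y - R t *ᵥ x))) := by
      rw [← Matrix.mulVec_mulVec, ← Matrix.mulVec_mulVec, dot_shift, hSsym, dotProduct_comm]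
    have p2 : (((Q t)⁻¹ * Dᵀ) *ᵥ (y - R t *ᵥ x)) ⬝ᵥ (y - R t *ᵥ x) = ((Q t)⁻¹ *ᵥ (y - R t *ᵥ x)) ⬝ᵥ (Dᵀ *ᵥ (y - R t *ᵥ x)) := by
      rw [← Matrix.mulVec_mulVec, dot_shift, hSsym, dotProduct_comm]
    have p3 : ((D * (Q t)⁻¹) *ᵥ (y - R t *ᵥ x)) ⬝ᵥ (y - R t *ᵥ x) = ((Q t)⁻¹ *ᵥ (y - R t *ᵥ x)) ⬝ᵥ (Dᵀ *ᵥ (y - R t *ᵥ x)) := by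
      rw [← Matrix.mulVec_mulVec, dot_shift]
    rw [p1, p2, p3]
    ring
  have k3 : ((Q t)⁻¹ *ᵥ (-((Dᵀ * R t) *ᵥ x))) ⬝ᵥ (y - R t *ᵥ x) = -(((Q t)⁻¹ *ᵥ (y - R t *ᵥ x)) ⬝ᵥ (Dᵀ *ᵥ (R t *ᵥ x))) := by
    rw [dot_shift, hSsym, neg_dotProduct, Matrix.mulVec_mulVec, dotProduct_comm]
  have k4 : ((Q t)⁻¹ *ᵥ (y - R t *ᵥ x)) ⬝ᵥ (-((Dᵀ * R t) *ᵥ x)) = -(((Q t)⁻¹ *ᵥ (y - R t *ᵥ x)) ⬝ᵥ (Dᵀ *ᵥ (R t *ᵥ x))) := by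
    rw [dotProduct_neg, ← Matrix.mulVec_mulVec]
  have k5 : ((Q t)⁻¹ *ᵥ (y - R t *ᵥ x)) ⬝ᵥ (Dᵀ *ᵥ y) = ((Q t)⁻¹ *ᵥ (y - R t *ᵥ x)) ⬝ᵥ (Dᵀ *ᵥ (y - R t *ᵥ x)) + ((Q t)⁻¹ *ᵥ (y - R t *ᵥ x)) ⬝ᵥ (Dᵀ *ᵥ (R t *ᵥ x)) := by
    rw [← dotProduct_add, ← Matrix.mulVec_add, sub_add_cancel]
  have hpow : (Q t).det ^ (-(1:ℝ)/2) = (Q t).det ^ (-(1:ℝ)/2 - 1) * (Q t).det := by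
    conv_lhs => rw [show (-(1:ℝ)/2) = (-(1:ℝ)/2 - 1) + 1 by ring]
    rw [Real.rpow_add_one hdetne]
  rw [htr, hgs, hUy, k1, k2, k3, k4, k5, hpow]
  ring
end
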